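/- arXiv:2203.13033 — 2 statements merged into one kernel-verified Lean document; each statement's English description precedes it below -/
import Mathlib

section
/- Let G be the infinite-dimensional Heisenberg Lie algebra, η a character of U(G₊), a ≠ 0, and M̃_{η,a} the Whittaker module over G̃ = G ⊕ ℂd. For a Whittaker vector v and x ∈ G₊ with [x, z] = 0 for z ∈ U(G₋), the element (x − η(x))·(d^k z v) is a linear combination of d^j z v with j < k and coefficients proportional to η(x). Consequently, if η(x_n) ≠ 0 for infinitely many n, then for any nonzero w ∈ M̃_{η,a} there exists u ∈ U(G₊ ⊕ ℂd) with u·w a nonzero element of U(G₋)·v. -/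
set_option maxHeartbeats 1000000
set_option synthInstance.maxHeartbeats 400000

open UniversalEnvelopingAlgebra

noncomputable section HeisenbergModel

attribute [local instance 100] LieRing.ofAssociativeRing

open MvPolynomial

abbrev HeisP : Type := MvPolynomial (Option ℕ+) ℂ

namespace HeisP

def tP : HeisP := X none
def yP (m : ℕ+) : HeisP := X (some m)

def mulE (p : HeisP) : Module.End ℂ HeisP := LinearMap.mulLeft ℂ p

def DD : Derivation ℂ HeisP HeisP :=
  MvPolynomial.mkDerivation ℂ fun i => match i with
    | none => 0
    | some m => (m : ℂ) • X (some m)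

def DE : Module.End ℂ HeisP := DD.toLinearMap

def TA (n : ℕ+) : HeisP →ₐ[ℂ] HeisP :=
  MvPolynomial.aeval fun i => match i with
    | none => X none - C (n : ℂ)
    | some m => X (some m)

def TE (n : ℕ+) : Module.End ℂ HeisP := (TA n).toLinearMap

def pdE (n : ℕ+) : Module.End ℂ HeisP := (MvPolynomial.pderiv (some n)).toLinearMap

@[simp] lemma mulE_apply (p q : HeisP) : mulE p q = p * q := rfl
@[simp] lemma DE_apply (p : HeisP) : DE p = DD p := rfl
@[simp] lemma TE_apply (n : ℕ+) (p : HeisP) : TE n p = TA n p := rfl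
@[simp] lemma pdE_apply (n : ℕ+) (p : HeisP) : pdE n p = MvPolynomial.pderiv (some n) p := rfl

@[simp] lemma DD_t : DD tP = 0 := by simp [DD, tP, mkDerivation_X]
@[simp] lemma DD_y (m : ℕ+) : DD (yP m) = (m : ℂ) • yP m := by simp [DD, yP, mkDerivation_X]
lemma DD_mul (u v : HeisP) : DD (u * v) = u * DD v + v * DD u := by
  simpa [smul_eq_mul] using DD.leibniz u v

@[simp] lemma TA_t (n : ℕ+) : TA n tP = tP - C (n : ℂ) := by simp [TA, tP]
@[simp] lemma TA_y (n m : ℕ+) : TA n (yP m) = yP m := by simp [TA, yP]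
@[simp] lemma pd_t (n : ℕ+) : MvPolynomial.pderiv (some n) tP = 0 := by
  simp [tP, pderiv_X_of_ne]
@[simp] lemma pd_y (n m : ℕ+) :
    MvPolynomial.pderiv (some n) (yP m) = if n = m then 1 else 0 := by
  rcases eq_or_ne n m with h | h
  · subst h; simp [yP]
  · simp [yP, pderiv_X_of_ne, (by simpa using (Option.some_injective _).ne_iff.mpr h.symm :
      (some m : Option ℕ+) ≠ some n), h]

-- commutation lemmas
lemma mulE_mulE (p q : HeisP) : mulE p * mulE q = mulE (p * q) := by
  refine LinearMap.ext fun r => ?_; simp [mulE, mul_assoc]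

lemma lie_mulE_mulE (p q : HeisP) : ⁅mulE p, mulE q⁆ = 0 := by
  rw [Ring.lie_def, mulE_mulE, mulE_mulE, mul_comm p q, sub_self]

lemma lie_DE_mulE (p : HeisP) : ⁅DE, mulE p⁆ = mulE (DD p) := by
  refine LinearMap.ext fun q => ?_
  simp only [Ring.lie_def, LinearMap.sub_apply, Module.End.mul_apply, mulE_apply, DE_apply]
  rw [Derivation.leibniz]
  simp [mul_comm, smul_eq_mul]

lemma lie_pdE_mulE (n : ℕ+) (p : HeisP) :
    ⁅pdE n, mulE p⁆ = mulE (MvPolynomial.pderiv (some n) p) := by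
  refine LinearMap.ext fun q => ?_
  simp only [Ring.lie_def, LinearMap.sub_apply, Module.End.mul_apply, mulE_apply, pdE_apply]
  rw [Derivation.leibniz]
  simp [mul_comm, smul_eq_mul]

lemma TA_mul_left (n : ℕ+) (p q : HeisP) : TA n (p * q) = TA n p * TA n q := map_mul _ _ _

lemma TE_mulE (n : ℕ+) (p : HeisP) : TE n * mulE p = mulE (TA n p) * TE n := by
  refine LinearMap.ext fun q => ?_; simp [TE, mulE, map_mul]

lemma lie_pdE_pdE (n m : ℕ+) : ⁅pdE n, pdE m⁆ = 0 := by
  have : ⁅MvPolynomial.pderiv (R := ℂ) (σ := Option ℕ+) (some n),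
      MvPolynomial.pderiv (R := ℂ) (σ := Option ℕ+) (some m)⁆ =
      (0 : Derivation ℂ HeisP HeisP) := by
    apply MvPolynomial.derivation_ext
    intro i
    simp only [Derivation.commutator_apply, Derivation.zero_apply]
    cases i <;> rcases Classical.em (some n = some m) with h | h <;>
      simp_all [MvPolynomial.pderiv_X, Pi.single_apply] <;>
      aesop
  have := congrArg Derivation.toLinearMap this
  simpa [pdE] using this

lemma TA_comp_TA (n m : ℕ+) : (TA n).comp (TA m) = (TA m).comp (TA n) := by
  apply MvPolynomial.algHom_ext
  intro i
  cases i <;> simp [TA, sub_sub, add_comm]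

lemma TE_TE (n m : ℕ+) : TE n * TE m = TE m * TE n := by
  refine LinearMap.ext fun q => ?_
  have := AlgHom.congr_fun (TA_comp_TA n m) q
  simpa [TE] using this

lemma TA_pderiv (n m : ℕ+) (p : HeisP) :
    TA n (MvPolynomial.pderiv (some m) p) = MvPolynomial.pderiv (some m) (TA n p) := by
  induction p using MvPolynomial.induction_on with
  | C r => simp
  | add p q hp hq => simp [hp, hq]
  | mul_X p i hp =>
    have hXi : TA n (MvPolynomial.pderiv (some m) (X i)) =
        MvPolynomial.pderiv (some m) (TA n (X i)) := by
      cases i with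
      | none =>
        rw [pderiv_X_of_ne (show (none : Option ℕ+) ≠ some m by simp), map_zero]
        have : TA n (X none) = tP - C ((n : ℂ)) := by simp [TA, tP]
        rw [this, map_sub, pd_t]
        have h0 : MvPolynomial.pderiv (σ := Option ℕ+) (some m) (C ((n : ℂ))) = 0 := pderiv_C
        rw [h0, sub_zero]
      | some r =>
        have hXr : TA n (X (some r)) = X (some r) := by simp [TA]
        rcases eq_or_ne r m with h | h
        · subst h
          rw [hXr, pderiv_X_self, map_one]
        · rw [hXr, pderiv_X_of_ne (by simpa using h), map_zero]
    calc TA n (MvPolynomial.pderiv (some m) (p * X i))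
        = TA n (MvPolynomial.pderiv (some m) p * X i + p * MvPolynomial.pderiv (some m) (X i)) :=
          by rw [pderiv_mul]
      _ = TA n (MvPolynomial.pderiv (some m) p) * TA n (X i) +
            TA n p * TA n (MvPolynomial.pderiv (some m) (X i)) := by
          rw [map_add, map_mul, map_mul]
      _ = MvPolynomial.pderiv (some m) (TA n p) * TA n (X i) +
            TA n p * MvPolynomial.pderiv (some m) (TA n (X i)) := by rw [hp, hXi]
      _ = MvPolynomial.pderiv (some m) (TA n p * TA n (X i)) := (pderiv_mul).symm
      _ = MvPolynomial.pderiv (some m) (TA n (p * X i)) := by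
          rw [show TA n (p * X i) = TA n p * TA n (X i) from map_mul _ _ _]

lemma TE_pdE (n m : ℕ+) : TE n * pdE m = pdE m * TE n := by
  refine LinearMap.ext fun q => ?_
  simpa using TA_pderiv n m q

lemma DD_TA (n : ℕ+) (p : HeisP) : DD (TA n p) = TA n (DD p) := by
  induction p using MvPolynomial.induction_on with
  | C r => simp
  | add p q hp hq => simp [hp, hq]
  | mul_X p i hp =>
    have hXi : DD (TA n (X i)) = TA n (DD (X i)) := by
      cases i with
      | none =>
        have : TA n (X none) = tP - C ((n : ℂ)) := by simp [TA, tP]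
        rw [this, map_sub, DD_t]
        have : DD (C ((n : ℂ))) = 0 := by simp
        rw [this, sub_zero, show (X none : HeisP) = tP from rfl, DD_t, map_zero]
      | some r =>
        have hXr : TA n (X (some r)) = X (some r) := by simp [TA]
        rw [hXr, show (X (some r) : HeisP) = yP r from rfl, DD_y, map_smul]
        rw [show TA n (yP r) = yP r from TA_y n r]
    calc DD (TA n (p * X i)) = DD (TA n p * TA n (X i)) := by rw [map_mul]
      _ = TA n p * DD (TA n (X i)) + TA n (X i) * DD (TA n p) := DD_mul _ _
      _ = TA n p * TA n (DD (X i)) + TA n (X i) * TA n (DD p) := by rw [hXi, hp]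
      _ = TA n (p * DD (X i) + X i * DD p) := by rw [map_add, map_mul, map_mul]
      _ = TA n (DD (p * X i)) := by rw [DD_mul]

lemma DE_TE (n : ℕ+) : DE * TE n = TE n * DE := by
  refine LinearMap.ext fun q => ?_
  simpa using DD_TA n q

lemma lie_DE_pdE (n : ℕ+) : ⁅DE, pdE n⁆ = -((n : ℂ)) • pdE n := by
  have key : ⁅DD, (MvPolynomial.pderiv (R := ℂ) (σ := Option ℕ+) (some n) :
      Derivation ℂ HeisP HeisP)⁆ =
      -((n : ℂ)) • (MvPolynomial.pderiv (R := ℂ) (σ := Option ℕ+) (some n) :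
      Derivation ℂ HeisP HeisP) := by
    apply MvPolynomial.derivation_ext
    intro i
    simp only [Derivation.commutator_apply, Derivation.smul_apply]
    cases i with
    | none =>
      show DD (MvPolynomial.pderiv (some n) tP) - MvPolynomial.pderiv (some n) (DD tP)
          = -((n:ℂ)) • MvPolynomial.pderiv (some n) tP
      simp
    | some r =>
      show DD (MvPolynomial.pderiv (some n) (yP r)) - MvPolynomial.pderiv (some n) (DD (yP r))
          = -((n:ℂ)) • MvPolynomial.pderiv (some n) (yP r)
      rcases eq_or_ne n r with h | h
      · subst h; simp
      · simp [pd_y, h]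
  have := congrArg Derivation.toLinearMap key
  simpa [pdE, DE] using this

lemma lie_mulEt_TE (n : ℕ+) : ⁅mulE tP, TE n⁆ = (n : ℂ) • TE n := by
  refine LinearMap.ext fun q => ?_
  simp only [Ring.lie_def, LinearMap.sub_apply, Module.End.mul_apply, LinearMap.smul_apply,
    mulE_apply, TE_apply]
  rw [map_mul, TA_t, sub_mul, sub_sub_cancel, C_mul']

lemma lie_mulEt_pdE (n : ℕ+) : ⁅mulE tP, pdE n⁆ = 0 := by
  have h := lie_pdE_mulE n tP
  rw [pd_t] at h
  have : ⁅mulE tP, pdE n⁆ = -⁅pdE n, mulE tP⁆ := by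
    rw [Ring.lie_def, Ring.lie_def]; abel
  rw [this, h]
  refine LinearMap.ext fun q => ?_
  simp [mulE]


def opd : Module.End ℂ HeisP := mulE tP - DE

def wt (u : Option ℕ+ →₀ ℕ) : ℂ :=
  u.sum fun i k => match i with
    | none => 0
    | some m => (k : ℂ) * (m : ℂ)

lemma DD_monomial (s : Option ℕ+ →₀ ℕ) (r : ℂ) :
    DD (monomial s r) = wt s • monomial s r := by
  rw [show DD = mkDerivation ℂ (fun i => match i with
      | none => 0
      | some m => ((m : ℕ+) : ℂ) • X (some m)) from rfl, mkDerivation_monomial, wt,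
    Finsupp.smul_sum, Finsupp.sum, Finsupp.sum, Finset.sum_smul]
  refine Finset.sum_congr rfl fun i hi => ?_
  cases i with
  | none => simp
  | some m =>
    have hle : Finsupp.single (some m : Option ℕ+) 1 ≤ s := by
      rw [Finsupp.single_le_iff]
      exact Nat.one_le_iff_ne_zero.mpr (Finsupp.mem_support_iff.mp hi)
    have hX : (X (some m) : HeisP) = monomial (Finsupp.single (some m) 1) 1 := by
      rw [← X_pow_eq_monomial, pow_one]
    have h1 : monomial (s - Finsupp.single (some m) 1) ((s (some m) : ℂ)) * X (some m)
        = monomial s ((s (some m) : ℂ)) := by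
      rw [hX, monomial_mul, mul_one, tsub_add_cancel_of_le hle]
    show r • (monomial (s - Finsupp.single (some m) 1) ((s (some m) : ℕ) : ℂ) •
          (((m : ℕ+) : ℂ) • X (some m)))
        = ((s (some m) : ℂ) * ((m : ℕ+) : ℂ)) • monomial s r
    rw [smul_eq_mul (α := HeisP), mul_smul_comm, h1, smul_smul, smul_monomial, smul_monomial]
    congr 1
    simp only [smul_eq_mul]
    ring

lemma coeff_DD (u : Option ℕ+ →₀ ℕ) (p : HeisP) :
    coeff u (DD p) = wt u * coeff u p := by
  induction p using MvPolynomial.induction_on' with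
  | monomial s r =>
    rw [DD_monomial, coeff_smul]
    rcases eq_or_ne s u with h | h
    · subst h; simp [coeff_monomial, smul_eq_mul]
    · simp [coeff_monomial, h]
  | add p q hp hq => rw [map_add, coeff_add, coeff_add, hp, hq, mul_add]

def emb (s : ℕ+ →₀ ℕ) : Option ℕ+ →₀ ℕ := Finsupp.mapDomain some s

lemma emb_none (s : ℕ+ →₀ ℕ) : emb s none = 0 :=
  Finsupp.mapDomain_notin_range _ _ (by simp)

lemma coeff_rename_none {q : MvPolynomial ℕ+ ℂ} {u : Option ℕ+ →₀ ℕ} (h : 0 < u none) :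
    coeff u (rename some q) = 0 := by
  apply coeff_rename_eq_zero
  intro d hd
  have := congrArg (fun v => v none) hd
  simp only [Finsupp.mapDomain_notin_range _ _ (by simp : (none : Option ℕ+) ∉ Set.range some)]
    at this
  omega

lemma degle (j : ℕ) (q : MvPolynomial ℕ+ ℂ) :
    ∀ u : Option ℕ+ →₀ ℕ, j < u none → coeff u ((opd ^ j) (rename some q)) = 0 := by
  induction j with
  | zero => intro u hu; exact coeff_rename_none hu
  | succ j ih =>
    intro u hu
    rw [pow_succ', Module.End.mul_apply]
    set p := (opd ^ j) (rename some q) with hp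
    rw [opd, LinearMap.sub_apply, mulE_apply, DE_apply, coeff_sub, coeff_DD,
      ih u (by omega), mul_zero, sub_zero]
    classical
    rw [show tP = X (none : Option ℕ+) from rfl, coeff_X_mul']
    rw [if_pos (Finsupp.mem_support_iff.mpr (by omega))]
    apply ih
    rw [Finsupp.tsub_apply, Finsupp.single_eq_same]
    omega

lemma coeff_top (m : ℕ) (q : MvPolynomial ℕ+ ℂ) (s : ℕ+ →₀ ℕ) :
    coeff (emb s + Finsupp.single none m) ((opd ^ m) (rename some q)) = coeff s q := by
  induction m with
  | zero =>
    rw [Finsupp.single_zero, add_zero, pow_zero, Module.End.one_apply]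
    exact coeff_rename_mapDomain some (Option.some_injective _) q s
  | succ m ih =>
    rw [pow_succ', Module.End.mul_apply]
    set p := (opd ^ m) (rename some q) with hp
    have hnone : (emb s + Finsupp.single (none : Option ℕ+) (m+1)) none = m + 1 := by
      rw [Finsupp.add_apply, emb_none, Finsupp.single_eq_same, zero_add]
    rw [opd, LinearMap.sub_apply, mulE_apply, DE_apply, coeff_sub, coeff_DD]
    rw [degle m q _ (by rw [hnone]; omega), mul_zero, sub_zero]
    have hsplit : emb s + Finsupp.single (none : Option ℕ+) (m+1)
        = Finsupp.single (none : Option ℕ+) 1 + (emb s + Finsupp.single none m) := by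
      have : Finsupp.single (none : Option ℕ+) (m+1)
          = Finsupp.single (none : Option ℕ+) m + Finsupp.single none 1 := by
        rw [← Finsupp.single_add]
      rw [this]
      abel
    rw [hsplit, show tP = X (none : Option ℕ+) from rfl, coeff_X_mul]
    exact ih

lemma model_ind (m : ℕ) (q : ℕ → MvPolynomial ℕ+ ℂ)
    (h : ∑ j ∈ Finset.range (m+1), (opd ^ j) (rename some (q j)) = 0) : q m = 0 := by
  apply MvPolynomial.ext
  intro s
  have h2 := congrArg (coeff (emb s + Finsupp.single none m)) h
  rw [coeff_zero] at h2
  rw [MvPolynomial.coeff_sum] at h2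
  rw [Finset.sum_range_succ] at h2
  have hz : ∀ j ∈ Finset.range m,
      coeff (emb s + Finsupp.single none m) ((opd ^ j) (rename some (q j))) = 0 := by
    intro j hj
    apply degle
    rw [Finsupp.add_apply, emb_none, Finsupp.single_eq_same, zero_add]
    exact Finset.mem_range.mp hj
  rw [Finset.sum_eq_zero hz, zero_add, coeff_top] at h2
  simpa using h2

def opE (η : ℕ+ → ℂ) (a : ℂ) : ℕ+ ⊕ ℕ+ ⊕ Unit ⊕ Unit → Module.End ℂ HeisP
  | Sum.inl n => η n • TE n + a • pdE n
  | Sum.inr (Sum.inl m) => mulE (yP m)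
  | Sum.inr (Sum.inr (Sum.inl _)) => a • (1 : Module.End ℂ HeisP)
  | Sum.inr (Sum.inr (Sum.inr _)) => opd

variable (η : ℕ+ → ℂ) (a : ℂ)

lemma mulE_one : mulE (1 : HeisP) = 1 := by
  refine LinearMap.ext fun q => ?_; simp [mulE]

lemma mulE_zero : mulE (0 : HeisP) = 0 := by
  refine LinearMap.ext fun q => ?_; simp [mulE]

lemma mulE_smul (r : ℂ) (p : HeisP) : mulE (r • p) = r • mulE p := by
  refine LinearMap.ext fun q => ?_; simp [mulE, smul_mul_assoc]

lemma lie_comm {f g : Module.End ℂ HeisP} (h : f * g = g * f) : ⁅f, g⁆ = 0 := by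
  rw [Ring.lie_def, h, sub_self]

lemma lie_smul_left (r : ℂ) (f g : Module.End ℂ HeisP) : ⁅r • f, g⁆ = r • ⁅f, g⁆ := by
  rw [Ring.lie_def, Ring.lie_def, smul_mul_assoc, mul_smul_comm]
  module

lemma lie_smul_right (r : ℂ) (f g : Module.End ℂ HeisP) : ⁅f, r • g⁆ = r • ⁅f, g⁆ := by
  rw [Ring.lie_def, Ring.lie_def, smul_mul_assoc, mul_smul_comm]
  module

lemma lie_smul_smul (r s : ℂ) (f g : Module.End ℂ HeisP) :
    ⁅r • f, s • g⁆ = (r * s) • ⁅f, g⁆ := by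
  rw [lie_smul_left, lie_smul_right, smul_smul]

lemma lie_opE_scalar_right (f : Module.End ℂ HeisP) (r : ℂ) :
    ⁅f, r • (1 : Module.End ℂ HeisP)⁆ = 0 := by
  rw [lie_smul_right, lie_comm (by rw [mul_one, one_mul]), smul_zero]

lemma lie_opE_scalar_left (f : Module.End ℂ HeisP) (r : ℂ) :
    ⁅r • (1 : Module.End ℂ HeisP), f⁆ = 0 := by
  rw [lie_smul_left, lie_comm (by rw [mul_one, one_mul]), smul_zero]

lemma pdE_pdE (n m : ℕ+) : pdE n * pdE m = pdE m * pdE n := by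
  have := lie_pdE_pdE n m
  rwa [Ring.lie_def, sub_eq_zero] at this

lemma lie_opE_XX (n n' : ℕ+) : ⁅opE η a (Sum.inl n), opE η a (Sum.inl n')⁆ = 0 := by
  show ⁅η n • TE n + a • pdE n, η n' • TE n' + a • pdE n'⁆ = 0
  have h1 : ⁅TE n, TE n'⁆ = 0 := lie_comm (TE_TE n n')
  have h2 : ⁅TE n, pdE n'⁆ = 0 := lie_comm (TE_pdE n n')
  have h3 : ⁅pdE n, TE n'⁆ = 0 := lie_comm (TE_pdE n' n).symm
  have h4 : ⁅pdE n, pdE n'⁆ = 0 := lie_comm (pdE_pdE n n')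
  rw [add_lie, lie_add, lie_add, lie_smul_smul, lie_smul_smul, lie_smul_smul, lie_smul_smul,
    h1, h2, h3, h4]
  simp

lemma lie_opE_XY (n m : ℕ+) :
    ⁅opE η a (Sum.inl n), opE η a (Sum.inr (Sum.inl m))⁆
      = if n = m then a • (1 : Module.End ℂ HeisP) else 0 := by
  show ⁅η n • TE n + a • pdE n, mulE (yP m)⁆ = _
  have h1 : ⁅TE n, mulE (yP m)⁆ = 0 := lie_comm (by rw [TE_mulE, TA_y])
  have h2 : ⁅pdE n, mulE (yP m)⁆ = mulE (if n = m then 1 else 0) := by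
    rw [lie_pdE_mulE, pd_y]
  rw [add_lie, lie_smul_left, lie_smul_left, h1, smul_zero, zero_add, h2]
  rcases eq_or_ne n m with h | h
  · simp [h, mulE_one]
  · simp [h, mulE_zero]

lemma lie_opE_YY (m m' : ℕ+) :
    ⁅opE η a (Sum.inr (Sum.inl m)), opE η a (Sum.inr (Sum.inl m'))⁆ = 0 :=
  lie_mulE_mulE _ _

lemma lie_opE_dX (n : ℕ+) :
    ⁅opd, opE η a (Sum.inl n)⁆ = (n : ℂ) • opE η a (Sum.inl n) := by
  show ⁅mulE tP - DE, η n • TE n + a • pdE n⁆ = (n : ℂ) • (η n • TE n + a • pdE n)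
  have h1 : ⁅mulE tP - DE, TE n⁆ = (n : ℂ) • TE n := by
    rw [sub_lie, lie_mulEt_TE, lie_comm (DE_TE n), sub_zero]
  have h2 : ⁅mulE tP - DE, pdE n⁆ = (n : ℂ) • pdE n := by
    rw [sub_lie, lie_mulEt_pdE, lie_DE_pdE, zero_sub]
    module
  rw [lie_add, lie_smul_right, lie_smul_right, h1, h2]
  module

lemma lie_opE_dY (m : ℕ+) :
    ⁅opd, opE η a (Sum.inr (Sum.inl m))⁆ = -(m : ℂ) • opE η a (Sum.inr (Sum.inl m)) := by
  show ⁅mulE tP - DE, mulE (yP m)⁆ = -(m : ℂ) • mulE (yP m)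
  rw [sub_lie, lie_mulE_mulE, lie_DE_mulE, DD_y, zero_sub, mulE_smul]
  module

@[simp] lemma opE_d_def : opE η a (Sum.inr (Sum.inr (Sum.inr ()))) = opd := rfl
@[simp] lemma opE_c_def : opE η a (Sum.inr (Sum.inr (Sum.inl ()))) = a • 1 := rfl
@[simp] lemma opE_Y_def (m : ℕ+) : opE η a (Sum.inr (Sum.inl m)) = mulE (yP m) := rfl
@[simp] lemma opE_X_def (n : ℕ+) : opE η a (Sum.inl n) = η n • TE n + a • pdE n := rfl

lemma opE_X_one (n : ℕ+) : opE η a (Sum.inl n) 1 = η n • 1 := by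
  show (η n • TE n + a • pdE n) 1 = η n • 1
  simp only [LinearMap.add_apply, LinearMap.smul_apply, TE_apply, pdE_apply]
  rw [map_one, Derivation.map_one_eq_zero, smul_zero, add_zero]

end HeisP

end HeisenbergModel

noncomputable section Aux

attribute [local instance 100] LieRing.ofAssociativeRing

section USide
variable {L : Type*} [LieRing L] [LieAlgebra ℂ L]

local notation "U" => UniversalEnvelopingAlgebra ℂ L

lemma adjoin_iota_top : Algebra.adjoin ℂ (Set.range (ι ℂ : L → U)) = ⊤ := by
  set S := Algebra.adjoin ℂ (Set.range (ι ℂ : L → U)) with hS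
  let f : L →ₗ⁅ℂ⁆ S :=
    { toFun := fun x => ⟨ι ℂ x, Algebra.subset_adjoin ⟨x, rfl⟩⟩
      map_add' := fun x y => Subtype.ext (by simp)
      map_smul' := fun r x => Subtype.ext (by simp)
      map_lie' := fun {x y} => Subtype.ext (by
        show (ι ℂ) ⁅x, y⁆ = ((⁅(⟨ι ℂ x, _⟩ : S), (⟨ι ℂ y, _⟩ : S)⁆ : S) : U)
        rw [LieHom.map_lie, Ring.lie_def, Ring.lie_def]
        push_cast
        rfl) }
  have key : S.val.comp (lift ℂ f) = AlgHom.id ℂ U := by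
    apply UniversalEnvelopingAlgebra.hom_ext
    apply LieHom.ext
    intro x
    show S.val ((lift ℂ f) (ι ℂ x)) = ι ℂ x
    rw [lift_ι_apply]
    rfl
  rw [eq_top_iff]
  intro u _
  have : S.val ((lift ℂ f) u) = u := by
    have := congrArg (fun g => g u) key
    simpa using this
  rw [← this]
  exact ((lift ℂ f) u).2

lemma iota_mul_pow (x dU : U) (n : ℂ) (hx : dU * x - x * dU = n • x) (k : ℕ) :
    x * dU ^ k = (dU - algebraMap ℂ U n) ^ k * x := by
  have hstep : x * dU = (dU - algebraMap ℂ U n) * x := by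
    have h2 : dU * x = n • x + x * dU := sub_eq_iff_eq_add.mp hx
    rw [sub_mul, h2, ← Algebra.smul_def]
    abel
  induction k with
  | zero => simp
  | succ k ih =>
    rw [pow_succ, ← mul_assoc, ih, mul_assoc, hstep, ← mul_assoc, ← pow_succ]

lemma pow_sub_expand (dU : U) (c : ℂ) (k : ℕ) :
    (dU - algebraMap ℂ U c) ^ k
      = ∑ j ∈ Finset.range (k+1), (((k.choose j : ℂ)) * (-c)^(k-j)) • dU ^ j := by
  have hcomm : Commute dU (algebraMap ℂ U (-c)) := (Algebra.commutes (-c) dU).symm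
  have := hcomm.add_pow k
  rw [sub_eq_add_neg, ← map_neg (algebraMap ℂ U)]
  rw [this]
  refine Finset.sum_congr rfl fun j hj => ?_
  rw [← map_pow, show ((k.choose j : U)) = algebraMap ℂ U ((k.choose j : ℂ)) from
      (map_natCast _ _).symm, mul_assoc, ← map_mul, ← Algebra.commutes, ← Algebra.smul_def,
    mul_comm ((-c)^(k-j)) _]


variable (X : ℕ+ → L) (c d : L) (η : ℕ+ → ℂ) (a : ℂ)
  (I : Submodule (UniversalEnvelopingAlgebra ℂ L) (UniversalEnvelopingAlgebra ℂ L))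

-- right absorption
lemma mk_mul_genX (hI : I = Submodule.span (UniversalEnvelopingAlgebra ℂ L)
      ((Set.range fun n => ι ℂ (X n) - algebraMap ℂ (UniversalEnvelopingAlgebra ℂ L) (η n)) ∪
        {ι ℂ c - algebraMap ℂ (UniversalEnvelopingAlgebra ℂ L) a}))
    (m : U) (n : ℕ+) :
    (Submodule.Quotient.mk (m * (ι ℂ (X n) - algebraMap ℂ U (η n)))
      : U ⧸ I) = 0 := by
  rw [Submodule.Quotient.mk_eq_zero, hI]
  exact Submodule.smul_mem _ m (Submodule.subset_span (Set.mem_union_left _ ⟨n, rfl⟩))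

lemma mk_mul_genC (hI : I = Submodule.span (UniversalEnvelopingAlgebra ℂ L)
      ((Set.range fun n => ι ℂ (X n) - algebraMap ℂ (UniversalEnvelopingAlgebra ℂ L) (η n)) ∪
        {ι ℂ c - algebraMap ℂ (UniversalEnvelopingAlgebra ℂ L) a}))
    (m : U) :
    (Submodule.Quotient.mk (m * (ι ℂ c - algebraMap ℂ U a)) : U ⧸ I) = 0 := by
  rw [Submodule.Quotient.mk_eq_zero, hI]
  exact Submodule.smul_mem _ m (Submodule.subset_span (Set.mem_union_right _ rfl))

lemma mk_mul_c (hI : I = Submodule.span (UniversalEnvelopingAlgebra ℂ L)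
      ((Set.range fun n => ι ℂ (X n) - algebraMap ℂ (UniversalEnvelopingAlgebra ℂ L) (η n)) ∪
        {ι ℂ c - algebraMap ℂ (UniversalEnvelopingAlgebra ℂ L) a}))
    (m : U) :
    (Submodule.Quotient.mk (m * ι ℂ c) : U ⧸ I) = a • (Submodule.Quotient.mk m : U ⧸ I) := by
  have h1 : m * ι ℂ c = m * (ι ℂ c - algebraMap ℂ U a) + a • m := by
    rw [mul_sub, Algebra.smul_def, Algebra.commutes]
    abel
  rw [h1, Submodule.Quotient.mk_add, mk_mul_genC X c η a I hI m, zero_add,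
    Submodule.Quotient.mk_smul I a m]

lemma mk_mul_x (hI : I = Submodule.span (UniversalEnvelopingAlgebra ℂ L)
      ((Set.range fun n => ι ℂ (X n) - algebraMap ℂ (UniversalEnvelopingAlgebra ℂ L) (η n)) ∪
        {ι ℂ c - algebraMap ℂ (UniversalEnvelopingAlgebra ℂ L) a}))
    (m : U) (n : ℕ+) :
    (Submodule.Quotient.mk (m * ι ℂ (X n)) : U ⧸ I)
      = (η n) • (Submodule.Quotient.mk m : U ⧸ I) := by
  have h1 : m * ι ℂ (X n) = m * (ι ℂ (X n) - algebraMap ℂ U (η n)) + (η n) • m := by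
    rw [mul_sub, Algebra.smul_def, Algebra.commutes]
    abel
  rw [h1, Submodule.Quotient.mk_add, mk_mul_genX X c η a I hI m n, zero_add,
    Submodule.Quotient.mk_smul I (η n) m]

-- the key degree-reduction identity (part (a) with explicit coefficients)
lemma part_a_explicit
    (hI : I = Submodule.span (UniversalEnvelopingAlgebra ℂ L)
      ((Set.range fun n => ι ℂ (X n) - algebraMap ℂ (UniversalEnvelopingAlgebra ℂ L) (η n)) ∪
        {ι ℂ c - algebraMap ℂ (UniversalEnvelopingAlgebra ℂ L) a}))
    (hdX : ∀ n, ⁅d, X n⁆ = (n : ℂ) • X n)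
    (n : ℕ+) (k : ℕ) (z : U)
    (hcomm : Commute (ι ℂ (X n)) z) :
    (ι ℂ (X n) - algebraMap ℂ U (η n)) •
        (Submodule.Quotient.mk ((ι ℂ d) ^ k * z) : U ⧸ I) =
      ∑ j ∈ Finset.range k,
        (η n * ((k.choose j : ℂ) * (-(n:ℂ))^(k-j))) •
          (Submodule.Quotient.mk ((ι ℂ d) ^ j * z) : U ⧸ I) := by
  set x := ι ℂ (X n) with hx
  set dU := ι ℂ d with hd
  have hbra : dU * x - x * dU = ((n:ℕ+):ℂ) • x := by
    have h1 := LieHom.map_lie (ι ℂ : L →ₗ⁅ℂ⁆ U) d (X n)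
    rw [hdX n, Ring.lie_def, map_smul] at h1
    rw [← h1]
  have hpow := iota_mul_pow x dU ((n:ℕ+):ℂ) hbra k
  -- main rearrangement in U
  have main : (x - algebraMap ℂ U (η n)) * ((dU) ^ k * z)
      = ((dU - algebraMap ℂ U ((n:ℕ+):ℂ)) ^ k * z) * (x - algebraMap ℂ U (η n))
        + ((dU - algebraMap ℂ U ((n:ℕ+):ℂ)) ^ k - dU ^ k) * z * algebraMap ℂ U (η n) := by
    have hxz : x * z = z * x := hcomm
    have e1 : x * (dU ^ k * z) = (dU - algebraMap ℂ U ((n:ℕ+):ℂ)) ^ k * z * x := by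
      rw [← mul_assoc, hpow, mul_assoc, hxz, mul_assoc]
    have hcent : ∀ u : U, u * algebraMap ℂ U (η n) = algebraMap ℂ U (η n) * u :=
      fun u => (Algebra.commutes (η n) u).symm
    rw [sub_mul, e1, ← hcent (dU ^ k * z)]
    noncomm_ring
  -- pass to the quotient
  have hq : (x - algebraMap ℂ U (η n)) • (Submodule.Quotient.mk ((dU) ^ k * z) : U ⧸ I)
      = Submodule.Quotient.mk (((dU - algebraMap ℂ U ((n:ℕ+):ℂ)) ^ k - dU ^ k) * z
          * algebraMap ℂ U (η n)) := by
    rw [← Submodule.Quotient.mk_smul, smul_eq_mul, main, Submodule.Quotient.mk_add,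
      mk_mul_genX X c η a I hI _ n, zero_add]
  rw [hq]
  -- expand the binomial
  have hexp : (dU - algebraMap ℂ U ((n:ℕ+):ℂ)) ^ k - dU ^ k
      = ∑ j ∈ Finset.range k, ((k.choose j : ℂ) * (-((n:ℕ+):ℂ))^(k-j)) • dU ^ j := by
    rw [pow_sub_expand, Finset.sum_range_succ]
    simp
  have hrepr : (∑ j ∈ Finset.range k, ((k.choose j : ℂ) * (-((n:ℕ+):ℂ))^(k-j)) • dU ^ j) * z
        * algebraMap ℂ U (η n)
      = ∑ j ∈ Finset.range k,
          (η n * ((k.choose j : ℂ) * (-((n:ℕ+):ℂ))^(k-j))) • (dU ^ j * z) := by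
    rw [Finset.sum_mul, Finset.sum_mul]
    refine Finset.sum_congr rfl fun j _ => ?_
    have hcent : (dU ^ j * z) * algebraMap ℂ U (η n) = η n • (dU ^ j * z) := by
      rw [← Algebra.commutes, ← Algebra.smul_def]
    rw [smul_mul_assoc, smul_mul_assoc, hcent, smul_smul, mul_comm]
  rw [hexp, hrepr]
  rw [show (Submodule.Quotient.mk (∑ j ∈ Finset.range k,
        (η n * ((k.choose j : ℂ) * (-((n:ℕ+):ℂ))^(k-j))) • (dU ^ j * z)) : U ⧸ I)
      = Submodule.mkQ I (∑ j ∈ Finset.range k,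
        (η n * ((k.choose j : ℂ) * (-((n:ℕ+):ℂ))^(k-j))) • (dU ^ j * z)) from rfl, map_sum]
  refine Finset.sum_congr rfl fun j _ => ?_
  rw [Submodule.mkQ_apply, Submodule.Quotient.mk_smul]

lemma A_free (Y : ℕ+ → L) (hYY : ∀ m n, ⁅Y m, Y n⁆ = 0)
    (π : U → MvPolynomial (Option ℕ+) ℂ)
    (hπ1 : π 1 = 1)
    (hπadd : ∀ u v, π (u + v) = π u + π v)
    (hπsmul : ∀ (r : ℂ) (u : U), π (r • u) = r • π u)
    (hπY : ∀ m, π (ι ℂ (Y m)) = MvPolynomial.X (some m))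
    (hπmul : ∀ z w, z ∈ Algebra.adjoin ℂ (Set.range fun m => ι ℂ (Y m)) →
      w ∈ Algebra.adjoin ℂ (Set.range fun m => ι ℂ (Y m)) → π (z * w) = π z * π w) :
    ∀ z ∈ Algebra.adjoin ℂ (Set.range fun m => ι ℂ (Y m)),
      (∃ p : MvPolynomial ℕ+ ℂ, π z = MvPolynomial.rename some p) ∧ (π z = 0 → z = 0) := by
  set A := Algebra.adjoin ℂ (Set.range fun m => ι ℂ (Y m)) with hA
  have hcomm : ∀ x ∈ A, ∀ y ∈ A, x * y = y * x := by
    intro x hx y hy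
    induction hx, hy using Algebra.adjoin_induction₂ with
    | mem_mem u v hu hv =>
      obtain ⟨mu, rfl⟩ := hu
      obtain ⟨mv, rfl⟩ := hv
      have h1 := LieHom.map_lie (ι ℂ : L →ₗ⁅ℂ⁆ U) (Y mu) (Y mv)
      rw [hYY, Ring.lie_def, map_zero] at h1
      exact (sub_eq_zero.mp h1.symm)
    | algebraMap_both r s => rw [← map_mul, ← map_mul, mul_comm]
    | algebraMap_left r u hu => exact Algebra.commutes r u
    | algebraMap_right r u hu => exact (Algebra.commutes r u).symm
    | add_left u v w hu hv hw h1 h2 => rw [add_mul, mul_add, h1, h2]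
    | add_right u v w hu hv hw h1 h2 => rw [add_mul, mul_add, h1, h2]
    | mul_left u v w hu hv hw h1 h2 => rw [mul_assoc, h2, ← mul_assoc, h1, mul_assoc]
    | mul_right u v w hu hv hw h1 h2 => rw [← mul_assoc, h1, mul_assoc, h2, ← mul_assoc]
  letI : CommRing A :=
    { (inferInstance : Ring A) with
      mul_comm := fun x y => Subtype.ext (hcomm x.1 x.2 y.1 y.2) }
  let g : ℕ+ → A := fun m => ⟨ι ℂ (Y m), Algebra.subset_adjoin ⟨m, rfl⟩⟩
  let σ : MvPolynomial ℕ+ ℂ →ₐ[ℂ] A := MvPolynomial.aeval g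
  have hσval : ∀ p, π ((σ p : A) : U) = MvPolynomial.rename some p := by
    intro p
    induction p using MvPolynomial.induction_on with
    | C r =>
      have h1 : ((σ (MvPolynomial.C r) : A) : U) = r • (1 : U) := by
        rw [show σ (MvPolynomial.C r) = algebraMap ℂ A r from MvPolynomial.aeval_C g r]
        rw [Algebra.algebraMap_eq_smul_one]
        rfl
      rw [h1, hπsmul, hπ1, MvPolynomial.rename_C, Algebra.smul_def, mul_one]
      rfl
    | add p q hp hq =>
      rw [map_add, show ((σ p + σ q : A) : U) = ((σ p : A) : U) + ((σ q : A) : U) from rfl,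
        hπadd, hp, hq, map_add]
    | mul_X p m ih =>
      have h1 : ((σ (p * MvPolynomial.X m) : A) : U) = ((σ p : A) : U) * ((σ (MvPolynomial.X m) : A) : U) := by
        rw [map_mul]; rfl
      rw [h1, hπmul _ _ (σ p).2 (σ (MvPolynomial.X m)).2, ih]
      have h2 : ((σ (MvPolynomial.X m) : A) : U) = ι ℂ (Y m) := by
        rw [show σ (MvPolynomial.X m) = g m from MvPolynomial.aeval_X g m]
      rw [h2, hπY, map_mul, MvPolynomial.rename_X]
  have hsurj : ∀ z, z ∈ A → ∃ p, ((σ p : A) : U) = z := by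
    intro z hz
    induction hz using Algebra.adjoin_induction with
    | mem u hu =>
      obtain ⟨m, rfl⟩ := hu
      exact ⟨MvPolynomial.X m, by rw [show σ (MvPolynomial.X m) = g m from MvPolynomial.aeval_X g m]⟩
    | algebraMap r =>
      refine ⟨MvPolynomial.C r, ?_⟩
      rw [show σ (MvPolynomial.C r) = algebraMap ℂ A r from MvPolynomial.aeval_C g r]
      rfl
    | add u v hu hv h1 h2 =>
      obtain ⟨p, hp⟩ := h1
      obtain ⟨q, hq⟩ := h2
      exact ⟨p + q, by rw [map_add]; push_cast; rw [hp, hq]⟩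
    | mul u v hu hv h1 h2 =>
      obtain ⟨p, hp⟩ := h1
      obtain ⟨q, hq⟩ := h2
      exact ⟨p * q, by rw [map_mul]; push_cast; rw [hp, hq]⟩
  intro z hz
  obtain ⟨p, hp⟩ := hsurj z hz
  constructor
  · exact ⟨p, by rw [← hp, hσval]⟩
  · intro h0
    rw [← hp, hσval] at h0
    have hpz : p = 0 := by
      have hinj := MvPolynomial.rename_injective (R := ℂ) some (Option.some_injective ℕ+)
      apply hinj
      rw [h0, map_zero]
    rw [← hp, hpz, map_zero]
    rfl

lemma c_central (c : L) (hc : ∀ z : L, ⁅c, z⁆ = 0) : ∀ u : U, ι ℂ c * u = u * ι ℂ c := by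
  intro u
  have hu : u ∈ Algebra.adjoin ℂ (Set.range (ι ℂ : L → U)) := by
    rw [adjoin_iota_top]; trivial
  induction hu using Algebra.adjoin_induction with
  | mem v hv =>
    obtain ⟨l, rfl⟩ := hv
    have h1 := LieHom.map_lie (ι ℂ : L →ₗ⁅ℂ⁆ U) c l
    rw [hc, Ring.lie_def, map_zero] at h1
    exact sub_eq_zero.mp h1.symm
  | algebraMap r => exact (Algebra.commutes r _).symm
  | add u v hu hv h1 h2 => rw [mul_add, add_mul, h1, h2]
  | mul u v hu hv h1 h2 => rw [← mul_assoc, h1, mul_assoc, h2, ← mul_assoc]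

lemma x_mul_A (Y : ℕ+ → L) (X : ℕ+ → L) (c : L)
    (hXY : ∀ m n, ⁅X m, Y n⁆ = if m = n then c else 0)
    (hc : ∀ z : L, ⁅c, z⁆ = 0) (n : ℕ+) :
    ∀ z ∈ Algebra.adjoin ℂ (Set.range fun m => ι ℂ (Y m)),
      ∃ z' ∈ Algebra.adjoin ℂ (Set.range fun m => ι ℂ (Y m)),
        ι ℂ (X n) * z = z * ι ℂ (X n) + ι ℂ c * z' := by
  intro z hz
  induction hz using Algebra.adjoin_induction with
  | mem v hv =>
    obtain ⟨m, rfl⟩ := hv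
    refine ⟨if n = m then 1 else 0, by split_ifs; exacts [one_mem _, zero_mem _], ?_⟩
    have h1 := LieHom.map_lie (ι ℂ : L →ₗ⁅ℂ⁆ U) (X n) (Y m)
    rw [hXY, Ring.lie_def] at h1
    have h2 : ι ℂ (X n) * ι ℂ (Y m) - ι ℂ (Y m) * ι ℂ (X n)
        = ι ℂ c * (if n = m then 1 else 0) := by
      rw [← h1, apply_ite (ι ℂ), mul_ite, mul_one, mul_zero, map_zero]
    rw [sub_eq_iff_eq_add] at h2
    rw [h2, add_comm]
  | algebraMap r =>
    exact ⟨0, zero_mem _, by rw [mul_zero, add_zero, Algebra.commutes]⟩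
  | add u v hu hv h1 h2 =>
    obtain ⟨u', hu', hequ⟩ := h1
    obtain ⟨v', hv', heqv⟩ := h2
    exact ⟨u' + v', add_mem hu' hv', by rw [mul_add, add_mul, mul_add, hequ, heqv]; abel⟩
  | mul u v hu hv h1 h2 =>
    obtain ⟨u', hu', hequ⟩ := h1
    obtain ⟨v', hv', heqv⟩ := h2
    refine ⟨u * v' + u' * v, add_mem (mul_mem hu hv') (mul_mem hu' hv), ?_⟩
    have hcc := c_central c hc
    calc ι ℂ (X n) * (u * v) = (ι ℂ (X n) * u) * v := by rw [mul_assoc]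
      _ = (u * ι ℂ (X n) + ι ℂ c * u') * v := by rw [hequ]
      _ = u * (ι ℂ (X n) * v) + ι ℂ c * u' * v := by rw [add_mul, mul_assoc, mul_assoc]
      _ = u * (v * ι ℂ (X n) + ι ℂ c * v') + ι ℂ c * u' * v := by rw [heqv]
      _ = u * v * ι ℂ (X n) + (u * (ι ℂ c * v') + ι ℂ c * (u' * v)) := by
          rw [mul_add, mul_assoc, mul_assoc]; abel
      _ = u * v * ι ℂ (X n) + ι ℂ c * (u * v' + u' * v) := by
          rw [← mul_assoc u, ← hcc u, mul_add, mul_assoc, mul_assoc]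

lemma x_commute_finite (Y : ℕ+ → L) (X : ℕ+ → L) (c : L)
    (hXY : ∀ m n, ⁅X m, Y n⁆ = if m = n then c else 0) :
    ∀ z ∈ Algebra.adjoin ℂ (Set.range fun m => ι ℂ (Y m)),
      ∃ F : Finset ℕ+, ∀ n, n ∉ F → Commute (ι ℂ (X n)) z := by
  intro z hz
  induction hz using Algebra.adjoin_induction with
  | mem v hv =>
    obtain ⟨m, rfl⟩ := hv
    refine ⟨{m}, fun n hn => ?_⟩
    have hnm : n ≠ m := by simpa using hn
    have h1 := LieHom.map_lie (ι ℂ : L →ₗ⁅ℂ⁆ U) (X n) (Y m)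
    rw [hXY, if_neg hnm, Ring.lie_def, map_zero] at h1
    exact sub_eq_zero.mp h1.symm
  | algebraMap r => exact ⟨∅, fun n _ => (Algebra.commutes r _).symm⟩
  | add u v hu hv h1 h2 =>
    obtain ⟨F1, hF1⟩ := h1
    obtain ⟨F2, hF2⟩ := h2
    exact ⟨F1 ∪ F2, fun n hn => Commute.add_right
      (hF1 n (fun h => hn (Finset.mem_union_left _ h)))
      (hF2 n (fun h => hn (Finset.mem_union_right _ h)))⟩
  | mul u v hu hv h1 h2 =>
    obtain ⟨F1, hF1⟩ := h1
    obtain ⟨F2, hF2⟩ := h2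
    exact ⟨F1 ∪ F2, fun n hn => Commute.mul_right
      (hF1 n (fun h => hn (Finset.mem_union_left _ h)))
      (hF2 n (fun h => hn (Finset.mem_union_right _ h)))⟩

def Wk (Y : ℕ+ → L) (d : L) (I : Submodule U U) (k : ℕ) : Submodule ℂ (U ⧸ I) :=
  Submodule.span ℂ {w | ∃ j, j ≤ k ∧ ∃ z ∈ Algebra.adjoin ℂ (Set.range fun m => ι ℂ (Y m)),
    w = Submodule.Quotient.mk ((ι ℂ d) ^ j * z)}

lemma Wk_mono (Y : ℕ+ → L) (d : L) (I : Submodule U U) {k k' : ℕ} (h : k ≤ k') :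
    Wk Y d I k ≤ Wk Y d I k' :=
  Submodule.span_mono (fun w ⟨j, hj, z, hz, hw⟩ => ⟨j, le_trans hj h, z, hz, hw⟩)

lemma mem_Wk (Y : ℕ+ → L) (d : L) (I : Submodule U U) {k j : ℕ} (hj : j ≤ k) {z : U}
    (hz : z ∈ Algebra.adjoin ℂ (Set.range fun m => ι ℂ (Y m))) :
    (Submodule.Quotient.mk ((ι ℂ d) ^ j * z) : U ⧸ I) ∈ Wk Y d I k :=
  Submodule.subset_span ⟨j, hj, z, hz, rfl⟩

lemma mk_sum_mem (I : Submodule U U) {s : Finset ℕ} {f : ℕ → U} {W : Submodule ℂ (U ⧸ I)}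
    (h : ∀ j ∈ s, (Submodule.Quotient.mk (f j) : U ⧸ I) ∈ W) :
    (Submodule.Quotient.mk (∑ j ∈ s, f j) : U ⧸ I) ∈ W := by
  rw [show (Submodule.Quotient.mk (∑ j ∈ s, f j) : U ⧸ I) = I.mkQ (∑ j ∈ s, f j) from rfl,
    map_sum]
  exact Submodule.sum_mem _ (fun j hj => h j hj)

lemma mem_Wk_exp (Y : ℕ+ → L) (d : L) (I : Submodule U U) (cc : ℂ) {j k : ℕ} (hjk : j ≤ k)
    {z : U} (hz : z ∈ Algebra.adjoin ℂ (Set.range fun m => ι ℂ (Y m))) :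
    (Submodule.Quotient.mk ((ι ℂ d - algebraMap ℂ U cc) ^ j * z) : U ⧸ I) ∈ Wk Y d I k := by
  rw [pow_sub_expand, Finset.sum_mul]
  apply mk_sum_mem
  intro l hl
  rw [smul_mul_assoc, Submodule.Quotient.mk_smul]
  exact Submodule.smul_mem _ _
    (mem_Wk Y d I (le_trans (Nat.lt_succ_iff.mp (Finset.mem_range.mp hl)) hjk) hz)

lemma smul_mk_eq (I : Submodule U U) (u v : U) :
    u • (Submodule.Quotient.mk v : U ⧸ I) = Submodule.Quotient.mk (u * v) := by
  rw [← smul_eq_mul, Submodule.Quotient.mk_smul]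

lemma smul_comm_mk (I : Submodule U U) (u : U) (r : ℂ) (w : U ⧸ I) :
    u • (r • w) = r • (u • w) := by
  obtain ⟨v, rfl⟩ := Submodule.Quotient.mk_surjective I w
  rw [← Submodule.Quotient.mk_smul, smul_mk_eq, smul_mk_eq, ← Submodule.Quotient.mk_smul,
    mul_smul_comm]

lemma span_exists (Y : ℕ+ → L) (X : ℕ+ → L) (c d : L) (η : ℕ+ → ℂ) (a : ℂ)
    (I : Submodule U U) (basis : Module.Basis (ℕ+ ⊕ ℕ+ ⊕ Unit ⊕ Unit) ℂ L)
    (hbasis : ⇑basis = Sum.elim X (Sum.elim Y (Sum.elim (fun _ => c) fun _ => d)))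
    (hI : I = Submodule.span (UniversalEnvelopingAlgebra ℂ L)
      ((Set.range fun n => ι ℂ (X n) - algebraMap ℂ (UniversalEnvelopingAlgebra ℂ L) (η n)) ∪
        {ι ℂ c - algebraMap ℂ (UniversalEnvelopingAlgebra ℂ L) a}))
    (hXY : ∀ m n, ⁅X m, Y n⁆ = if m = n then c else 0)
    (hc : ∀ z : L, ⁅c, z⁆ = 0)
    (hdX : ∀ n, ⁅d, X n⁆ = (n : ℂ) • X n)
    (hdY : ∀ n, ⁅d, Y n⁆ = -(n : ℂ) • Y n) :
    ∀ w : U ⧸ I, ∃ k, w ∈ Wk Y d I k := by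
  set A := Algebra.adjoin ℂ (Set.range fun m => ι ℂ (Y m)) with hA
  set dU := ι ℂ d with hdU
  -- action of the generators on the filtration
  have WD : ∀ (k : ℕ) (w : U ⧸ I), w ∈ Wk Y d I k → dU • w ∈ Wk Y d I (k+1) := by
    intro k w hw
    induction hw using Submodule.span_induction with
    | mem w hw =>
      obtain ⟨j, hj, z, hz, rfl⟩ := hw
      rw [smul_mk_eq, ← mul_assoc, ← pow_succ']
      exact mem_Wk Y d I (by omega) hz
    | zero => rw [smul_zero]; exact zero_mem _
    | add x y hx hy h1 h2 => rw [smul_add]; exact add_mem h1 h2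
    | smul r x hx h1 => rw [smul_comm_mk]; exact Submodule.smul_mem _ _ h1
  have WC : ∀ (k : ℕ) (w : U ⧸ I), w ∈ Wk Y d I k → (ι ℂ c) • w ∈ Wk Y d I k := by
    intro k w hw
    induction hw using Submodule.span_induction with
    | mem w hw =>
      obtain ⟨j, hj, z, hz, rfl⟩ := hw
      rw [smul_mk_eq, c_central c hc, mk_mul_c X c η a I hI]
      exact Submodule.smul_mem _ _ (mem_Wk Y d I hj hz)
    | zero => rw [smul_zero]; exact zero_mem _
    | add x y hx hy h1 h2 => rw [smul_add]; exact add_mem h1 h2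
    | smul r x hx h1 => rw [smul_comm_mk]; exact Submodule.smul_mem _ _ h1
  have WY : ∀ (m : ℕ+) (k : ℕ) (w : U ⧸ I), w ∈ Wk Y d I k → (ι ℂ (Y m)) • w ∈ Wk Y d I k := by
    intro m k w hw
    induction hw using Submodule.span_induction with
    | mem w hw =>
      obtain ⟨j, hj, z, hz, rfl⟩ := hw
      have hbra : dU * ι ℂ (Y m) - ι ℂ (Y m) * dU = (-((m:ℕ+):ℂ)) • ι ℂ (Y m) := by
        have h1 := LieHom.map_lie (ι ℂ : L →ₗ⁅ℂ⁆ U) d (Y m)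
        rw [hdY m, Ring.lie_def, map_smul] at h1
        exact h1.symm
      have hpow := iota_mul_pow (ι ℂ (Y m)) dU (-((m:ℕ+):ℂ)) hbra j
      rw [smul_mk_eq, ← mul_assoc, hpow, mul_assoc]
      exact mem_Wk_exp Y d I _ hj (mul_mem (Algebra.subset_adjoin ⟨m, rfl⟩) hz)
    | zero => rw [smul_zero]; exact zero_mem _
    | add x y hx hy h1 h2 => rw [smul_add]; exact add_mem h1 h2
    | smul r x hx h1 => rw [smul_comm_mk]; exact Submodule.smul_mem _ _ h1
  have WX : ∀ (n : ℕ+) (k : ℕ) (w : U ⧸ I), w ∈ Wk Y d I k → (ι ℂ (X n)) • w ∈ Wk Y d I k := by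
    intro n k w hw
    induction hw using Submodule.span_induction with
    | mem w hw =>
      obtain ⟨j, hj, z, hz, rfl⟩ := hw
      have hbra : dU * ι ℂ (X n) - ι ℂ (X n) * dU = ((n:ℕ+):ℂ) • ι ℂ (X n) := by
        have h1 := LieHom.map_lie (ι ℂ : L →ₗ⁅ℂ⁆ U) d (X n)
        rw [hdX n, Ring.lie_def, map_smul] at h1
        exact h1.symm
      have hpow := iota_mul_pow (ι ℂ (X n)) dU (((n:ℕ+):ℂ)) hbra j
      obtain ⟨z', hz', heq⟩ := x_mul_A Y X c hXY hc n z hz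
      rw [smul_mk_eq, ← mul_assoc, hpow, mul_assoc, heq, mul_add, Submodule.Quotient.mk_add]
      apply add_mem
      · rw [← mul_assoc, mk_mul_x X c η a I hI]
        exact Submodule.smul_mem _ _ (mem_Wk_exp Y d I _ hj hz)
      · rw [show ι ℂ c * z' = z' * ι ℂ c from c_central c hc z', ← mul_assoc,
          mk_mul_c X c η a I hI]
        exact Submodule.smul_mem _ _ (mem_Wk_exp Y d I _ hj hz')
    | zero => rw [smul_zero]; exact zero_mem _
    | add x y hx hy h1 h2 => rw [smul_add]; exact add_mem h1 h2
    | smul r x hx h1 => rw [smul_comm_mk]; exact Submodule.smul_mem _ _ h1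
  -- the subalgebra of elements preserving the filtration
  let P : U → Prop := fun u => ∀ v : U,
    (∃ k, (Submodule.Quotient.mk v : U ⧸ I) ∈ Wk Y d I k) →
    (∃ k, (Submodule.Quotient.mk (u * v) : U ⧸ I) ∈ Wk Y d I k)
  let S : Subalgebra ℂ U :=
    { carrier := {u | P u}
      mul_mem' := fun {u v} hu hv w hw => by
        rw [mul_assoc]
        exact hu _ (hv _ hw)
      add_mem' := fun {u v} hu hv w hw => by
        obtain ⟨k1, h1⟩ := hu w hw
        obtain ⟨k2, h2⟩ := hv w hw
        refine ⟨max k1 k2, ?_⟩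
        rw [add_mul, Submodule.Quotient.mk_add]
        exact add_mem (Wk_mono Y d I (le_max_left _ _) h1)
          (Wk_mono Y d I (le_max_right _ _) h2)
      algebraMap_mem' := fun r v hv => by
        obtain ⟨k, hk⟩ := hv
        refine ⟨k, ?_⟩
        rw [← Algebra.smul_def, Submodule.Quotient.mk_smul]
        exact Submodule.smul_mem _ _ hk }
  -- basis elements of L act nicely
  have hLsub : ∀ l : L, P (ι ℂ l) := by
    intro l
    let T : Submodule ℂ L :=
      { carrier := {l | P (ι ℂ l)}
        zero_mem' := fun v hv => ⟨0, by
          rw [map_zero, zero_mul]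
          exact zero_mem _⟩
        add_mem' := fun {l1 l2} h1 h2 v hv => by
          obtain ⟨k1, hk1⟩ := h1 v hv
          obtain ⟨k2, hk2⟩ := h2 v hv
          refine ⟨max k1 k2, ?_⟩
          rw [map_add, add_mul, Submodule.Quotient.mk_add]
          exact add_mem (Wk_mono Y d I (le_max_left _ _) hk1)
            (Wk_mono Y d I (le_max_right _ _) hk2)
        smul_mem' := fun r l hl v hv => by
          obtain ⟨k, hk⟩ := hl v hv
          refine ⟨k, ?_⟩
          rw [map_smul, smul_mul_assoc, Submodule.Quotient.mk_smul]
          exact Submodule.smul_mem _ _ hk }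
    have hbT : ∀ i, basis i ∈ T := by
      intro i
      have hb := congrFun hbasis i
      rcases i with n | m | u | u
      · intro v hv
        obtain ⟨k, hk⟩ := hv
        refine ⟨k, ?_⟩
        rw [show basis (Sum.inl n) = X n from hb, ← smul_mk_eq]
        exact WX n k _ hk
      · intro v hv
        obtain ⟨k, hk⟩ := hv
        refine ⟨k, ?_⟩
        rw [show basis (Sum.inr (Sum.inl m)) = Y m from hb, ← smul_mk_eq]
        exact WY m k _ hk
      · intro v hv
        obtain ⟨k, hk⟩ := hv
        refine ⟨k, ?_⟩
        rw [show basis (Sum.inr (Sum.inr (Sum.inl u))) = c from hb, ← smul_mk_eq]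
        exact WC k _ hk
      · intro v hv
        obtain ⟨k, hk⟩ := hv
        refine ⟨k + 1, ?_⟩
        rw [show basis (Sum.inr (Sum.inr (Sum.inr u))) = d from hb, ← smul_mk_eq]
        exact WD k _ hk
    have hspan : Submodule.span ℂ (Set.range ⇑basis) ≤ T :=
      Submodule.span_le.mpr (fun x ⟨i, hi⟩ => hi ▸ hbT i)
    have : l ∈ T := hspan (by rw [Module.Basis.span_eq]; trivial)
    exact this
  have hSall : ∀ u : U, P u := by
    intro u
    have h1 : Algebra.adjoin ℂ (Set.range (ι ℂ : L → U)) ≤ S :=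
      Algebra.adjoin_le (fun x ⟨l, hl⟩ => hl ▸ hLsub l)
    have h2 : u ∈ S := h1 (by rw [adjoin_iota_top]; trivial)
    exact h2
  intro w
  obtain ⟨v, rfl⟩ := Submodule.Quotient.mk_surjective I w
  have h0 : ∃ k, (Submodule.Quotient.mk (1 : U) : U ⧸ I) ∈ Wk Y d I k := by
    refine ⟨0, ?_⟩
    have := mem_Wk (I := I) Y d (le_refl 0) (one_mem A)
    rwa [pow_zero, one_mul] at this
  have := hSall v 1 h0
  rwa [mul_one] at this

end USide

section Rep
variable {L : Type*} [LieRing L] [LieAlgebra ℂ L]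

local notation "U" => UniversalEnvelopingAlgebra ℂ L

open UniversalEnvelopingAlgebra

lemma exists_rep (X Y : ℕ+ → L) (c d : L)
    (basis : Module.Basis (ℕ+ ⊕ ℕ+ ⊕ Unit ⊕ Unit) ℂ L)
    (hbasis : ⇑basis = Sum.elim X (Sum.elim Y (Sum.elim (fun _ => c) fun _ => d)))
    (hXX : ∀ m n, ⁅X m, X n⁆ = 0)
    (hYY : ∀ m n, ⁅Y m, Y n⁆ = 0)
    (hXY : ∀ m n, ⁅X m, Y n⁆ = if m = n then c else 0)
    (hc : ∀ z : L, ⁅c, z⁆ = 0)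
    (hdX : ∀ n, ⁅d, X n⁆ = (n : ℂ) • X n)
    (hdY : ∀ n, ⁅d, Y n⁆ = -(n : ℂ) • Y n)
    (hdc : ⁅d, c⁆ = 0) (η : ℕ+ → ℂ) (a : ℂ) :
    ∃ ρ : UniversalEnvelopingAlgebra ℂ L →ₐ[ℂ] Module.End ℂ HeisP,
      (∀ n, ρ (ι ℂ (X n)) = HeisP.opE η a (Sum.inl n)) ∧
      (∀ m, ρ (ι ℂ (Y m)) = HeisP.mulE (HeisP.yP m)) ∧
      ρ (ι ℂ c) = a • 1 ∧
      ρ (ι ℂ d) = HeisP.opd := by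
  classical
  set F : L →ₗ[ℂ] Module.End ℂ HeisP := basis.constr ℂ (HeisP.opE η a) with hF
  have hbX : ∀ n, basis (Sum.inl n) = X n := fun n => congrFun hbasis (Sum.inl n)
  have hbY : ∀ m, basis (Sum.inr (Sum.inl m)) = Y m := fun m =>
    congrFun hbasis (Sum.inr (Sum.inl m))
  have hbc : ∀ u, basis (Sum.inr (Sum.inr (Sum.inl u))) = c := fun u =>
    congrFun hbasis (Sum.inr (Sum.inr (Sum.inl u)))
  have hbd : ∀ u, basis (Sum.inr (Sum.inr (Sum.inr u))) = d := fun u =>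
    congrFun hbasis (Sum.inr (Sum.inr (Sum.inr u)))
  have hFb : ∀ i, F (basis i) = HeisP.opE η a i := fun i => basis.constr_basis ℂ _ i
  have hFX : ∀ n, F (X n) = HeisP.opE η a (Sum.inl n) := fun n => by
    rw [← hbX n, hFb]
  have hFY : ∀ m, F (Y m) = HeisP.mulE (HeisP.yP m) := fun m => by
    rw [← hbY m, hFb]; rfl
  have hFc : F c = a • 1 := by rw [← hbc ⟨⟩, hFb]; rfl
  have hFd : F d = HeisP.opd := by rw [← hbd ⟨⟩, hFb]; rfl
  have key : ∀ i j, F ⁅basis i, basis j⁆ = ⁅F (basis i), F (basis j)⁆ := by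
    rintro (n | m | u | u) (n' | m' | u' | u')
    · rw [hbX, hbX, hXX, map_zero, hFX, hFX, HeisP.lie_opE_XX]
    · rw [hbX, hbY, hXY, hFX, hFY]
      rcases eq_or_ne n m' with h | h
      · rw [if_pos h, hFc, ← HeisP.opE_c_def η a, ← HeisP.opE_Y_def η a,
          HeisP.lie_opE_XY, if_pos h, HeisP.opE_c_def]
      · rw [if_neg h, map_zero, ← HeisP.opE_Y_def η a, HeisP.lie_opE_XY, if_neg h]
    · rw [hbX, hbc]
      have h1 : ⁅X n, c⁆ = 0 := by rw [← lie_skew, hc, neg_zero]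
      rw [h1, map_zero, hFX, hFc, HeisP.lie_opE_scalar_right]
    · rw [hbX, hbd]
      have h1 : ⁅X n, d⁆ = -((n : ℂ) • X n) := by rw [← lie_skew, hdX]
      rw [h1, map_neg, map_smul, hFX, hFd]
      rw [← lie_skew, HeisP.lie_opE_dX]
    · rw [hbY, hbX]
      have hXYop : ⁅F (X n'), F (Y m)⁆ = if n' = m then a • (1 : Module.End ℂ HeisP) else 0 := by
        rw [hFX, hFY, ← HeisP.opE_Y_def η a, HeisP.lie_opE_XY]
      calc F ⁅Y m, X n'⁆ = -F ⁅X n', Y m⁆ := by rw [← map_neg, lie_skew]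
        _ = -(if n' = m then a • (1 : Module.End ℂ HeisP) else 0) := by
            rw [hXY]
            rcases eq_or_ne n' m with h | h
            · rw [if_pos h, if_pos h, hFc]
            · rw [if_neg h, if_neg h, map_zero]
        _ = ⁅F (Y m), F (X n')⁆ := by rw [← hXYop, ← lie_skew, neg_neg]
    · rw [hbY, hbY, hYY, map_zero, hFY, hFY, ← HeisP.opE_Y_def η a, ← HeisP.opE_Y_def η a,
        HeisP.lie_opE_YY]
    · rw [hbY, hbc]
      have h1 : ⁅Y m, c⁆ = 0 := by rw [← lie_skew, hc, neg_zero]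
      rw [h1, map_zero, hFY, hFc, HeisP.lie_opE_scalar_right]
    · rw [hbY, hbd]
      have hop : ⁅HeisP.opd, HeisP.mulE (HeisP.yP m)⁆ = -(m : ℂ) • HeisP.mulE (HeisP.yP m) :=
        HeisP.lie_opE_dY η a m
      calc F ⁅Y m, d⁆ = -F ⁅d, Y m⁆ := by rw [← map_neg, lie_skew]
        _ = -(-(m : ℂ) • F (Y m)) := by rw [hdY, map_smul]
        _ = ⁅F (Y m), F d⁆ := by rw [hFY, hFd, ← lie_skew, hop]
    · rw [hbc, hbX, hc, map_zero, hFc, HeisP.lie_opE_scalar_left]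
    · rw [hbc, hbY, hc, map_zero, hFc, HeisP.lie_opE_scalar_left]
    · rw [hbc, hc, map_zero, hFc, HeisP.lie_opE_scalar_left]
    · rw [hbc, hbd, hc, map_zero, hFc, HeisP.lie_opE_scalar_left]
    · rw [hbd, hbX, hdX, map_smul, hFd, hFX]
      exact (HeisP.lie_opE_dX η a n').symm
    · rw [hbd, hbY, hdY, map_smul, hFd, hFY]
      exact (HeisP.lie_opE_dY η a m').symm
    · rw [hbd, hbc, hdc, map_zero, hFd, hFc, HeisP.lie_opE_scalar_right]
    · rw [hbd, lie_self, map_zero, lie_self]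
  have hB1a : ∀ (x x' y : L), F ⁅x + x', y⁆ = F ⁅x, y⁆ + F ⁅x', y⁆ := fun x x' y => by
    rw [add_lie, map_add]
  have hB1b : ∀ (r : ℂ) (x y : L), F ⁅r • x, y⁆ = r • F ⁅x, y⁆ := fun r x y => by
    rw [smul_lie, map_smul]
  have hB1c : ∀ (x y y' : L), F ⁅x, y + y'⁆ = F ⁅x, y⁆ + F ⁅x, y'⁆ := fun x y y' => by
    rw [lie_add, map_add]
  have hB1d : ∀ (r : ℂ) (x y : L), F ⁅x, r • y⁆ = r • F ⁅x, y⁆ := fun r x y => by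
    rw [lie_smul, map_smul]
  have hB2a : ∀ (x x' y : L), ⁅F (x + x'), F y⁆ = ⁅F x, F y⁆ + ⁅F x', F y⁆ := fun x x' y => by
    rw [map_add, add_lie]
  have hB2b : ∀ (r : ℂ) (x y : L), ⁅F (r • x), F y⁆ = r • ⁅F x, F y⁆ := fun r x y => by
    rw [map_smul, HeisP.lie_smul_left]
  have hB2c : ∀ (x y y' : L), ⁅F x, F (y + y')⁆ = ⁅F x, F y⁆ + ⁅F x, F y'⁆ := fun x y y' => by
    rw [map_add, lie_add]
  have hB2d : ∀ (r : ℂ) (x y : L), ⁅F x, F (r • y)⁆ = r • ⁅F x, F y⁆ := fun r x y => by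
    rw [map_smul, HeisP.lie_smul_right]
  let B₁ : L →ₗ[ℂ] L →ₗ[ℂ] Module.End ℂ HeisP := LinearMap.mk₂ ℂ (fun x y => F ⁅x, y⁆)
    hB1a hB1b hB1c hB1d
  let B₂ : L →ₗ[ℂ] L →ₗ[ℂ] Module.End ℂ HeisP := LinearMap.mk₂ ℂ (fun x y => ⁅F x, F y⁆)
    hB2a hB2b hB2c hB2d
  have hB : B₁ = B₂ := basis.ext fun i => basis.ext fun j => key i j
  let ρLie : L →ₗ⁅ℂ⁆ Module.End ℂ HeisP :=
    { F with
      map_lie' := fun {x y} => LinearMap.congr_fun (LinearMap.congr_fun hB x) y }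
  have hρLie : ∀ l, ρLie l = F l := fun l => rfl
  refine ⟨UniversalEnvelopingAlgebra.lift ℂ ρLie, fun n => ?_, fun m => ?_, ?_, ?_⟩
  · rw [lift_ι_apply, hρLie, hFX]
  · rw [lift_ι_apply, hρLie, hFY]
  · rw [lift_ι_apply, hρLie, hFc]
  · rw [lift_ι_apply, hρLie, hFd]

end Rep

end Aux

open UniversalEnvelopingAlgebra

/-- In the extended Heisenberg Whittaker module `M̃_{η,a}`, for `x = x_n`
commuting with `z ∈ U(G₋)`, the element `(x − η(x))·(d^k z v)` is a linear combination of
the `d^j z v` with `j < k` and coefficients proportional to `η(x)`.  Consequently, if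
`η(x_n) ≠ 0` for infinitely many `n` (and `a ≠ 0`), every nonzero `w ∈ M̃_{η,a}` can be
moved by some `u ∈ U(G₊ ⊕ ℂd)` to a nonzero element of `U(G₋)·v`. -/
theorem extended_heisenberg_degree_reduction
    {L : Type*} [LieRing L] [LieAlgebra ℂ L]
    (X Y : ℕ+ → L) (c d : L)
    (basis : Module.Basis (ℕ+ ⊕ ℕ+ ⊕ Unit ⊕ Unit) ℂ L)
    (hbasis : ⇑basis = Sum.elim X (Sum.elim Y (Sum.elim (fun _ => c) fun _ => d)))
    (hXX : ∀ m n, ⁅X m, X n⁆ = 0)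
    (hYY : ∀ m n, ⁅Y m, Y n⁆ = 0)
    (hXY : ∀ m n, ⁅X m, Y n⁆ = if m = n then c else 0)
    (hc : ∀ z : L, ⁅c, z⁆ = 0)
    (hdX : ∀ n, ⁅d, X n⁆ = (n : ℂ) • X n)
    (hdY : ∀ n, ⁅d, Y n⁆ = -(n : ℂ) • Y n)
    (hdc : ⁅d, c⁆ = 0)
    (η : ℕ+ → ℂ) (a : ℂ)
    (I : Submodule (UniversalEnvelopingAlgebra ℂ L) (UniversalEnvelopingAlgebra ℂ L))
    (hI : I = Submodule.span (UniversalEnvelopingAlgebra ℂ L)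
      ((Set.range fun n => ι ℂ (X n) - algebraMap ℂ (UniversalEnvelopingAlgebra ℂ L) (η n)) ∪
        {ι ℂ c - algebraMap ℂ (UniversalEnvelopingAlgebra ℂ L) a})) :
    -- (a) degree reduction in `d`:
    (∀ (n : ℕ+) (k : ℕ) (z : UniversalEnvelopingAlgebra ℂ L),
      z ∈ Algebra.adjoin ℂ (Set.range fun m => ι ℂ (Y m)) →
      Commute (ι ℂ (X n)) z →
      ∃ f : ℕ → ℂ,
        (ι ℂ (X n) - algebraMap ℂ (UniversalEnvelopingAlgebra ℂ L) (η n)) •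
            (Submodule.Quotient.mk ((ι ℂ d) ^ k * z) : UniversalEnvelopingAlgebra ℂ L ⧸ I) =
          ∑ j ∈ Finset.range k, (η n * f j) •
            (Submodule.Quotient.mk ((ι ℂ d) ^ j * z) :
              UniversalEnvelopingAlgebra ℂ L ⧸ I)) ∧
    -- (b) consequence:
    ({n : ℕ+ | η n ≠ 0}.Infinite → a ≠ 0 →
      ∀ w : UniversalEnvelopingAlgebra ℂ L ⧸ I, w ≠ 0 →
        ∃ u ∈ Algebra.adjoin ℂ ({ι ℂ d} ∪ Set.range fun n => ι ℂ (X n)),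
          u • w ≠ 0 ∧
          ∃ b ∈ Algebra.adjoin ℂ (Set.range fun m => ι ℂ (Y m)),
            u • w = Submodule.Quotient.mk b) := by
  classical
  obtain ⟨ρ, hρX, hρY, hρc, hρd⟩ :=
    exists_rep X Y c d basis hbasis hXX hYY hXY hc hdX hdY hdc η a
  set A := Algebra.adjoin ℂ (Set.range fun m => ι ℂ (Y m)) with hA
  constructor
  · intro n k z _hz hcomm
    exact ⟨fun j => (k.choose j : ℂ) * (-((n:ℕ+):ℂ))^(k-j),
      part_a_explicit X c d η a I hI hdX n k z hcomm⟩
  · intro hinf _ha w hw0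
    have hπ1 : ρ (1 : UniversalEnvelopingAlgebra ℂ L) 1 = 1 := by
      rw [show ρ (1 : UniversalEnvelopingAlgebra ℂ L) = 1 from map_one ρ]
      rfl
    have hπadd : ∀ u v : UniversalEnvelopingAlgebra ℂ L,
        ρ (u + v) 1 = ρ u 1 + ρ v 1 := by
      intro u v; rw [map_add]; rfl
    have hπsmul : ∀ (r : ℂ) (u : UniversalEnvelopingAlgebra ℂ L),
        ρ (r • u) 1 = r • (ρ u 1) := by
      intro r u; rw [map_smul]; rfl
    have hπY : ∀ m, ρ (ι ℂ (Y m)) 1 = MvPolynomial.X (some m) := by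
      intro m; rw [hρY]
      show HeisP.yP m * 1 = _
      rw [mul_one]; rfl
    have halgval : ∀ (r : ℂ) (q : HeisP),
        (algebraMap ℂ (Module.End ℂ HeisP) r) q = r • q := fun r q => rfl
    have hρA : ∀ z, z ∈ A → ∀ q, ρ z q = (ρ z 1) * q := by
      intro z hz
      induction hz using Algebra.adjoin_induction with
      | mem v hv =>
        obtain ⟨m, rfl⟩ := hv
        intro q
        rw [hρY]
        show HeisP.yP m * q = (HeisP.yP m * 1) * q
        rw [mul_one]
      | algebraMap r =>
        intro q
        rw [AlgHom.commutes, halgval, halgval, smul_mul_assoc, one_mul]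
      | add u v hu hv h1 h2 =>
        intro q
        rw [map_add, LinearMap.add_apply, LinearMap.add_apply, h1, h2, add_mul]
      | mul u v hu hv h1 h2 =>
        intro q
        rw [map_mul, Module.End.mul_apply, Module.End.mul_apply, h2, h1, h2 1, h1 (ρ v 1 * 1),
          mul_one, mul_assoc]
    have hπmul : ∀ z w : UniversalEnvelopingAlgebra ℂ L, z ∈ A → w ∈ A →
        ρ (z * w) 1 = ρ z 1 * ρ w 1 := by
      intro z w hz _hw
      rw [map_mul, Module.End.mul_apply, hρA z hz]
    have hAfree := A_free Y hYY (fun u => ρ u 1) hπ1 hπadd hπsmul hπY hπmul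
    have hπI : ∀ u ∈ I, ρ u 1 = 0 := by
      intro u hu
      rw [hI] at hu
      induction hu using Submodule.span_induction with
      | mem v hv =>
        rcases hv with ⟨n, rfl⟩ | hv
        · rw [map_sub, LinearMap.sub_apply, hρX, AlgHom.commutes, halgval,
            HeisP.opE_X_one, sub_self]
        · rw [Set.mem_singleton_iff] at hv
          subst hv
          rw [map_sub, LinearMap.sub_apply, hρc, AlgHom.commutes, halgval]
          show a • (1 : HeisP) - a • 1 = 0
          rw [sub_self]
      | zero => rw [map_zero]; rfl
      | add x y hx hy h1 h2 => rw [map_add, LinearMap.add_apply, h1, h2, add_zero]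
      | smul r x hx h1 => rw [smul_eq_mul, map_mul, Module.End.mul_apply, h1, map_zero]
    have hmk0 : ∀ u : UniversalEnvelopingAlgebra ℂ L,
        (Submodule.Quotient.mk u : UniversalEnvelopingAlgebra ℂ L ⧸ I) = 0 → ρ u 1 = 0 :=
      fun u h => hπI u ((Submodule.Quotient.mk_eq_zero I).mp h)
    have hmk_sum : ∀ (s : Finset ℕ) (f : ℕ → UniversalEnvelopingAlgebra ℂ L),
        (Submodule.Quotient.mk (∑ j ∈ s, f j) : UniversalEnvelopingAlgebra ℂ L ⧸ I)
          = ∑ j ∈ s, Submodule.Quotient.mk (f j) := by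
      intro s f
      rw [show (Submodule.Quotient.mk (∑ j ∈ s, f j) : UniversalEnvelopingAlgebra ℂ L ⧸ I)
          = I.mkQ (∑ j ∈ s, f j) from rfl, map_sum]
      rfl
    have hdist : ∀ (u : UniversalEnvelopingAlgebra ℂ L) (s : Finset ℕ)
        (f : ℕ → UniversalEnvelopingAlgebra ℂ L),
        u • (Submodule.Quotient.mk (∑ j ∈ s, f j) : UniversalEnvelopingAlgebra ℂ L ⧸ I)
          = ∑ j ∈ s, u • (Submodule.Quotient.mk (f j) :
              UniversalEnvelopingAlgebra ℂ L ⧸ I) := by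
      intro u s f
      rw [hmk_sum, Finset.smul_sum]
    have hIND : ∀ (m : ℕ) (Z : ℕ → UniversalEnvelopingAlgebra ℂ L), (∀ j, Z j ∈ A) →
        (Submodule.Quotient.mk (∑ j ∈ Finset.range (m+1), (ι ℂ d)^j * Z j) :
          UniversalEnvelopingAlgebra ℂ L ⧸ I) = 0 →
        Z m = 0 := by
      intro m Z hZ h0
      choose q hq using fun j => (hAfree (Z j) (hZ j)).1
      have h2 := hmk0 _ h0
      rw [map_sum] at h2
      have h2' : ∑ j ∈ Finset.range (m+1), ρ ((ι ℂ d)^j * Z j) 1 = 0 := by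
        rw [← h2]
        exact (LinearMap.sum_apply _ _ _).symm
      have h1 : ∑ j ∈ Finset.range (m+1),
          (HeisP.opd ^ j) (MvPolynomial.rename some (q j)) = 0 := by
        rw [← h2']
        refine Finset.sum_congr rfl fun j _ => ?_
        rw [map_mul, map_pow, hρd, Module.End.mul_apply, ← hq j]
      have h3 := HeisP.model_ind m q h1
      exact (hAfree (Z m) (hZ m)).2 (by rw [hq m, h3, map_zero])
    have hREP : ∀ (k : ℕ) (v : UniversalEnvelopingAlgebra ℂ L ⧸ I), v ∈ Wk Y d I k →
        ∃ Z : ℕ → UniversalEnvelopingAlgebra ℂ L, (∀ j, Z j ∈ A) ∧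
          v = Submodule.Quotient.mk (∑ j ∈ Finset.range (k+1), (ι ℂ d)^j * Z j) := by
      intro k v hv
      induction hv using Submodule.span_induction with
      | mem w hw =>
        obtain ⟨j, hj, z, hz, rfl⟩ := hw
        refine ⟨fun l => if l = j then z else 0, ?_, ?_⟩
        · intro l
          by_cases h : l = j
          · simp only [h, if_true]; exact hz
          · simp only [if_neg h]
            exact zero_mem _
        · congr 1
          rw [Finset.sum_eq_single j]
          · simp
          · intro b _hb hbj; simp [hbj]
          · intro hj'; exact absurd (Finset.mem_range.mpr (by omega)) hj'
      | zero =>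
        refine ⟨0, fun j => zero_mem _, ?_⟩
        have hs : ∑ j ∈ Finset.range (k+1), (ι ℂ d)^j * (0 : ℕ → UniversalEnvelopingAlgebra ℂ L) j
            = 0 := Finset.sum_eq_zero (fun j _ => by rw [Pi.zero_apply, mul_zero])
        rw [hs]
        rfl
      | add x y hx hy h1 h2 =>
        obtain ⟨Z1, hZ1, e1⟩ := h1
        obtain ⟨Z2, hZ2, e2⟩ := h2
        refine ⟨fun j => Z1 j + Z2 j, fun j => add_mem (hZ1 j) (hZ2 j), ?_⟩
        rw [e1, e2, ← Submodule.Quotient.mk_add]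
        congr 1
        rw [← Finset.sum_add_distrib]
        exact Finset.sum_congr rfl fun j _ => by rw [mul_add]
      | smul r x hx h1 =>
        obtain ⟨Z1, hZ1, e1⟩ := h1
        refine ⟨fun j => r • Z1 j, fun j => Subalgebra.smul_mem _ (hZ1 j) r, ?_⟩
        rw [e1, ← Submodule.Quotient.mk_smul I r, Finset.smul_sum]
        congr 1
        exact Finset.sum_congr rfl fun j _ => (mul_smul_comm r _ _).symm
    have hMAIN : ∀ (k : ℕ) (v : UniversalEnvelopingAlgebra ℂ L ⧸ I), v ∈ Wk Y d I k → v ≠ 0 →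
        ∃ u ∈ Algebra.adjoin ℂ ({ι ℂ d} ∪ Set.range fun n => ι ℂ (X n)),
          u • v ≠ 0 ∧ ∃ b ∈ A, u • v = Submodule.Quotient.mk b := by
      intro k
      induction k with
      | zero =>
        have hex : ∀ v : UniversalEnvelopingAlgebra ℂ L ⧸ I, v ∈ Wk Y d I 0 →
            ∃ b ∈ A, v = Submodule.Quotient.mk b := by
          intro v hv
          induction hv using Submodule.span_induction with
          | mem w hw =>
            obtain ⟨j, hj, z, hz, rfl⟩ := hw
            have hj0 : j = 0 := Nat.le_zero.mp hj
            subst hj0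
            exact ⟨z, hz, by rw [pow_zero, one_mul]⟩
          | zero => exact ⟨0, zero_mem _, (Submodule.Quotient.mk_zero _).symm⟩
          | add x y hx hy h1 h2 =>
            obtain ⟨b1, hb1, e1⟩ := h1
            obtain ⟨b2, hb2, e2⟩ := h2
            exact ⟨b1 + b2, add_mem hb1 hb2, by rw [e1, e2, Submodule.Quotient.mk_add]⟩
          | smul r x hx h1 =>
            obtain ⟨b1, hb1, e1⟩ := h1
            exact ⟨r • b1, Subalgebra.smul_mem _ hb1 r,
              by rw [e1, Submodule.Quotient.mk_smul I r]⟩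
        intro v hv hv0
        obtain ⟨b, hb, hbe⟩ := hex v hv
        exact ⟨1, one_mem _, by rw [one_smul]; exact ⟨hv0, b, hb, hbe⟩⟩
      | succ k ih =>
        intro v hv hv0
        by_cases hvk : v ∈ Wk Y d I k
        · exact ih v hvk hv0
        obtain ⟨Z, hZ, hveq⟩ := hREP (k+1) v hv
        choose FF hFF using fun j => x_commute_finite Y X c hXY (Z j) (hZ j)
        set G : Finset ℕ+ := (Finset.range (k+2)).biUnion (fun j => FF j) with hG
        obtain ⟨n, hn⟩ := (hinf.diff (G.finite_toSet)).nonempty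
        have hn0 : η n ≠ 0 := hn.1
        have hcommn : ∀ j ∈ Finset.range (k+2), Commute (ι ℂ (X n)) (Z j) := by
          intro j hj
          apply hFF j n
          intro hmem
          exact hn.2 (Finset.mem_coe.mpr (Finset.mem_biUnion.mpr ⟨j, hj, hmem⟩))
        set coef : ℕ → ℕ → ℂ := fun j l => η n * ((j.choose l : ℂ) * (-((n:ℕ+):ℂ))^(j-l))
          with hcoef
        set xg : UniversalEnvelopingAlgebra ℂ L :=
          ι ℂ (X n) - algebraMap ℂ (UniversalEnvelopingAlgebra ℂ L) (η n) with hxg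
        set Wf : ℕ → UniversalEnvelopingAlgebra ℂ L :=
          fun l => ∑ j ∈ Finset.range (k+2), if l < j then coef j l • Z j else 0 with hWf
        have hWfA : ∀ l, Wf l ∈ A := fun l => sum_mem (fun j _hj => by
          split_ifs
          exacts [Subalgebra.smul_mem _ (hZ j) _, zero_mem _])
        have hstep : xg • v = Submodule.Quotient.mk
            (∑ l ∈ Finset.range (k+1), (ι ℂ d)^l * Wf l) := by
          calc xg • v = ∑ j ∈ Finset.range (k+2),
              xg • (Submodule.Quotient.mk ((ι ℂ d)^j * Z j) :
                UniversalEnvelopingAlgebra ℂ L ⧸ I) := by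
                rw [hveq, hdist]
            _ = ∑ j ∈ Finset.range (k+2), ∑ l ∈ Finset.range (k+1),
                (if l < j then coef j l •
                  (Submodule.Quotient.mk ((ι ℂ d)^l * Z j) :
                    UniversalEnvelopingAlgebra ℂ L ⧸ I) else 0) := by
                refine Finset.sum_congr rfl fun j hj => ?_
                rw [part_a_explicit X c d η a I hI hdX n j (Z j) (hcommn j hj)]
                have hfil : (Finset.range (k+1)).filter (fun l => l < j) = Finset.range j := by
                  ext l
                  simp only [Finset.mem_filter, Finset.mem_range]
                  have := Finset.mem_range.mp hj
                  omega
                rw [← Finset.sum_filter, hfil]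
            _ = ∑ l ∈ Finset.range (k+1), ∑ j ∈ Finset.range (k+2),
                (if l < j then coef j l •
                  (Submodule.Quotient.mk ((ι ℂ d)^l * Z j) :
                    UniversalEnvelopingAlgebra ℂ L ⧸ I) else 0) := Finset.sum_comm
            _ = Submodule.Quotient.mk (∑ l ∈ Finset.range (k+1), (ι ℂ d)^l * Wf l) := by
                rw [hmk_sum]
                refine Finset.sum_congr rfl fun l _hl => ?_
                have hexp : (ι ℂ d)^l * Wf l = ∑ j ∈ Finset.range (k+2),
                    (if l < j then coef j l • ((ι ℂ d)^l * Z j) else 0) := by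
                  rw [show Wf l = ∑ j ∈ Finset.range (k+2),
                    (if l < j then coef j l • Z j else 0) from rfl, Finset.mul_sum]
                  refine Finset.sum_congr rfl fun j _hj => ?_
                  rw [mul_ite, mul_zero, mul_smul_comm]
                rw [hexp, hmk_sum]
                refine (Finset.sum_congr rfl fun j _hj => ?_).symm
                split_ifs
                · rw [Submodule.Quotient.mk_smul]
                · exact Submodule.Quotient.mk_zero _
        have hmem : xg • v ∈ Wk Y d I k := by
          rw [hstep]
          apply mk_sum_mem
          intro l hl
          exact mem_Wk Y d I (Nat.lt_succ_iff.mp (Finset.mem_range.mp hl)) (hWfA l)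
        by_cases hz0 : xg • v = 0
        · exfalso
          have h0 : (Submodule.Quotient.mk
              (∑ l ∈ Finset.range (k+1), (ι ℂ d)^l * Wf l) :
                UniversalEnvelopingAlgebra ℂ L ⧸ I) = 0 := by rw [← hstep]; exact hz0
          have hWk0 := hIND k Wf hWfA h0
          have hWfk : Wf k = coef (k+1) k • Z (k+1) := by
            rw [show Wf k = ∑ j ∈ Finset.range (k+2),
              (if k < j then coef j k • Z j else 0) from rfl]
            rw [Finset.sum_eq_single (k+1)]
            · rw [if_pos (by omega)]
            · intro b hb hbk
              rw [if_neg (by have := Finset.mem_range.mp hb; omega)]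
            · intro habs
              exact absurd (Finset.mem_range.mpr (by omega)) habs
          have hcoef0 : coef (k+1) k ≠ 0 := by
            rw [show coef (k+1) k
              = η n * (((k+1).choose k : ℂ) * (-((n:ℕ+):ℂ))^((k+1)-k)) from rfl]
            have h1 : ((k+1).choose k : ℂ) ≠ 0 := by
              rw [Nat.choose_succ_self_right]
              exact_mod_cast Nat.succ_ne_zero k
            have h2 : (-((n:ℕ+):ℂ))^((k+1)-k) ≠ 0 := by
              apply pow_ne_zero
              simp only [ne_eq, neg_eq_zero]
              exact_mod_cast n.ne_zero
            exact mul_ne_zero hn0 (mul_ne_zero h1 h2)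
          have hZk1 : Z (k+1) = 0 := by
            rw [hWfk] at hWk0
            exact (smul_eq_zero.mp hWk0).resolve_left hcoef0
          apply hvk
          rw [hveq, Finset.sum_range_succ, hZk1, mul_zero, add_zero]
          apply mk_sum_mem
          intro j hj
          exact mem_Wk Y d I (Nat.lt_succ_iff.mp (Finset.mem_range.mp hj)) (hZ j)
        · obtain ⟨u', hu', hne, b, hb, hub⟩ := ih (xg • v) hmem hz0
          refine ⟨u' * xg, mul_mem hu' ?_, ?_, b, hb, ?_⟩
          · exact sub_mem
              (Algebra.subset_adjoin (Set.mem_union_right _ ⟨n, rfl⟩))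
              (Subalgebra.algebraMap_mem _ _)
          · rw [mul_smul]; exact hne
          · rw [mul_smul]; exact hub
    obtain ⟨k, hk⟩ := span_exists Y X c d η a I basis hbasis hI hXY hc hdX hdY w
    exact hMAIN k w hk hw0
end

section
/- Let 𝔩₀ and 𝔤' be Lie algebras with a common one-dimensional center ℂc, 𝔩 = (𝔩₀ + 𝔤')/(identifying centers), with [𝔩₀, 𝔤'] = 0. Let V be an irreducible 𝔩-module on which c acts by a ∈ ℂ, and suppose S ⊆ V is an irreducible 𝔤'-submodule with End_{𝔤'}(S) = ℂ. Then V ≅ M ⊗ S for some irreducible 𝔩₀-module M with c acting by a. -/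
open TensorProduct

open LinearMap in
/-- Jacobson-type density: if `S` is a simple `B`-module whose `B`-endomorphisms are all
scalar multiplications by complex numbers, then any `ℂ`-linear endomorphism of `S` can be
matched by some `b : B` on any finite family of points. -/
lemma aux_density {B S : Type*} [Ring B] [AddCommGroup S] [Module B S] [Module ℂ S]
    (hS : IsSimpleModule B S)
    (hEnd : ∀ f : S →ₗ[B] S, ∃ z : ℂ, ∀ s : S, f s = z • s)
    {ι : Type*} [Fintype ι] [DecidableEq ι] (s : ι → S) (f : S →ₗ[ℂ] S) :
    ∃ b : B, ∀ i, b • s i = f (s i) := by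
  classical
  have hsemi : IsSemisimpleModule B (ι → S) := by
    apply isSemisimpleModule_of_isSemisimpleModule_submodule'
      (p := fun i => range (single B (fun _ : ι => S) i))
    · intro i
      exact IsSemisimpleModule.range _
    · exact iSup_range_single B _
  set x : ι → S := s with hx
  obtain ⟨q, hq⟩ := exists_isCompl (Submodule.span B {x})
  set W := Submodule.span B {x} with hW
  set pr := W.linearProjOfIsCompl q hq with hpr
  set π : (ι → S) →ₗ[B] (ι → S) := W.subtype ∘ₗ pr with hπdef
  have hxW : x ∈ W := Submodule.mem_span_singleton_self x
  have hπx : π x = x := by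
    have h1 : pr x = ⟨x, hxW⟩ :=
      Submodule.linearProjOfIsCompl_apply_left hq ⟨x, hxW⟩
    show (pr x : ι → S) = x
    rw [h1]
  have hz : ∀ i j : ι, ∃ z : ℂ, ∀ v : S, (π (Pi.single j v)) i = z • v := by
    intro i j
    obtain ⟨z, hzz⟩ := hEnd ((proj i) ∘ₗ π ∘ₗ (single B (fun _ : ι => S) j))
    exact ⟨z, fun v => hzz v⟩
  choose z hz using hz
  have hπ : ∀ u : ι → S, ∀ i, π u i = ∑ j, z i j • u j := by
    intro u i
    have hu : u = ∑ j, Pi.single j (u j) := (Finset.univ_sum_single u).symm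
    calc π u i = π (∑ j, Pi.single j (u j)) i := by rw [← hu]
      _ = ∑ j, π (Pi.single j (u j)) i := by rw [map_sum, Finset.sum_apply]
      _ = ∑ j, z i j • u j := Finset.sum_congr rfl fun j _ => hz i j (u j)
  have hs : ∀ i, s i = ∑ j, z i j • s j := by
    intro i
    conv_lhs => rw [show s i = x i from rfl, ← hπx]
    exact hπ x i
  set y : ι → S := fun i => f (s i) with hy
  have hπy : π y = y := by
    funext i
    rw [hπ y i]
    have h2 : ∑ j, z i j • y j = f (∑ j, z i j • s j) := by
      rw [map_sum]
      exact Finset.sum_congr rfl fun j _ => (map_smul f (z i j) (s j)).symm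
    rw [h2, ← hs i]
  have hyW : y ∈ W := by
    rw [← hπy]
    exact (pr y).2
  obtain ⟨b, hb⟩ := Submodule.mem_span_singleton.mp hyW
  exact ⟨b, fun i => congrFun hb i⟩

/-- Existence of a dual functional taking value 1 at a nonzero vector. -/
lemma aux_dual {S : Type*} [AddCommGroup S] [Module ℂ S] {s₀ : S} (hs₀ : s₀ ≠ 0) :
    ∃ φ : S →ₗ[ℂ] ℂ, φ s₀ = 1 := by
  have h := (not_iff_not.mpr (Module.forall_dual_apply_eq_zero_iff ℂ s₀)).mpr hs₀
  push_neg at h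
  obtain ⟨φ, hφ⟩ := h
  exact ⟨(φ s₀)⁻¹ • φ, by simp [inv_mul_cancel₀ hφ]⟩

/-- Let `𝔩₀` and `𝔤'` have commuting actions on `V` (encoded via their
enveloping algebras `A`, `B`), with central elements `cA ∈ A`, `cB ∈ B` representing the
identified central element `c` and acting on `V` by the same scalar `a`.  If `V` is
irreducible under the joint action, and `S ⊆ V` is an irreducible `B`-submodule with
`End_B(S) = ℂ`, then `V ≅ M ⊗ S` for the irreducible `A`-module `M = Hom_B(S, V)` on
which `c` acts by `a`, via the (equivariant) evaluation isomorphism. -/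
theorem irreducible_module_factors_as_tensor
    {A B V : Type*}
    [Ring A] [Algebra ℂ A] [Ring B] [Algebra ℂ B]
    [AddCommGroup V] [Module ℂ V] [Module A V] [Module B V]
    [IsScalarTower ℂ A V] [IsScalarTower ℂ B V]
    [SMulCommClass A B V] [SMulCommClass B A V]
    (cA : A) (hcA : ∀ x : A, cA * x = x * cA)
    (cB : B) (hcB : ∀ x : B, cB * x = x * cB)
    (a : ℂ) (hcAact : ∀ v : V, cA • v = a • v) (hcBact : ∀ v : V, cB • v = a • v)
    (hV : Nontrivial V)
    (hirr : ∀ p : Submodule ℂ V,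
      (∀ (x : A) (v : V), v ∈ p → x • v ∈ p) →
      (∀ (b : B) (v : V), v ∈ p → b • v ∈ p) → p = ⊥ ∨ p = ⊤)
    (S : Submodule B V)
    (hS : IsSimpleModule B S)
    (hEnd : ∀ f : S →ₗ[B] S, ∃ z : ℂ, ∀ s : S, f s = z • s) :
    IsSimpleModule A (S →ₗ[B] V) ∧
      (∀ (f : S →ₗ[B] V) (s : S), (cA • f) s = a • f s) ∧
      ∃ e : ((S →ₗ[B] V) ⊗[ℂ] S) ≃ₗ[ℂ] V,
        (∀ (f : S →ₗ[B] V) (s : S), e (f ⊗ₜ s) = f s) ∧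
        (∀ (x : A) (f : S →ₗ[B] V) (s : S), e ((x • f) ⊗ₜ s) = x • e (f ⊗ₜ s)) ∧
        (∀ (b : B) (f : S →ₗ[B] V) (s : S), e (f ⊗ₜ (b • s)) = b • e (f ⊗ₜ s)) := by
  classical
  set M := (S →ₗ[B] V) with hM
  -- the evaluation bilinear map
  let evb : M →ₗ[ℂ] S →ₗ[ℂ] V := LinearMap.mk₂ ℂ (fun f s => f s)
    (fun f g s => rfl) (fun c f s => rfl) (fun f s t => map_add f s t)
    (fun c f s => LinearMap.map_smul_of_tower f c s)
  let ev : M ⊗[ℂ] S →ₗ[ℂ] V := TensorProduct.lift evb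
  have hev : ∀ (f : M) (s : S), ev (f ⊗ₜ s) = f s := fun f s => rfl
  have hevA : ∀ (x : A) (f : M) (s : S), ev ((x • f) ⊗ₜ s) = x • ev (f ⊗ₜ s) :=
    fun x f s => rfl
  have hevB : ∀ (b : B) (f : M) (s : S), ev (f ⊗ₜ (b • s)) = b • ev (f ⊗ₜ s) :=
    fun b f s => map_smul f b s
  -- a nonzero element of S
  have hSnt : Nontrivial S := hS.nontrivial
  obtain ⟨s₀, hs₀⟩ := exists_ne (0 : S)
  -- surjectivity of ev
  have hrange : LinearMap.range ev = ⊤ := by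
    have hA : ∀ (x : A) (v : V), v ∈ LinearMap.range ev → x • v ∈ LinearMap.range ev := by
      rintro x v ⟨t, rfl⟩
      induction t using TensorProduct.induction_on with
      | zero => rw [map_zero, smul_zero]; exact Submodule.zero_mem _
      | tmul f s => exact ⟨(x • f) ⊗ₜ s, hevA x f s⟩
      | add t₁ t₂ h₁ h₂ =>
        rw [map_add, smul_add]; exact Submodule.add_mem _ h₁ h₂
    have hB : ∀ (b : B) (v : V), v ∈ LinearMap.range ev → b • v ∈ LinearMap.range ev := by
      rintro b v ⟨t, rfl⟩
      induction t using TensorProduct.induction_on with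
      | zero => rw [map_zero, smul_zero]; exact Submodule.zero_mem _
      | tmul f s => exact ⟨f ⊗ₜ (b • s), hevB b f s⟩
      | add t₁ t₂ h₁ h₂ =>
        rw [map_add, smul_add]; exact Submodule.add_mem _ h₁ h₂
    rcases hirr (LinearMap.range ev) hA hB with h | h
    · exfalso
      have hmem : (s₀ : V) ∈ LinearMap.range ev := ⟨S.subtype ⊗ₜ s₀, rfl⟩
      rw [h, Submodule.mem_bot] at hmem
      exact hs₀ (Subtype.ext hmem)
    · exact h
  -- a basis of S over ℂ
  set ι := Module.Basis.ofVectorSpaceIndex ℂ S with hι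
  set 𝒷 : Module.Basis ι ℂ S := Module.Basis.ofVectorSpace ℂ S with h𝒷
  -- the equivalence M ⊗ S ≃ (ι →₀ M)
  let e₀ : (M ⊗[ℂ] S) ≃ₗ[ℂ] (ι →₀ M) :=
    (TensorProduct.congr (LinearEquiv.refl ℂ M) 𝒷.repr).trans
      (TensorProduct.finsuppScalarRight ℂ ℂ M ι)
  -- the evaluation in coordinates
  let L : (ι →₀ M) →ₗ[ℂ] V := Finsupp.lsum ℂ (fun i => evb.flip (𝒷 i))
  have hLsingle : ∀ (i : ι) (f : M), L (Finsupp.single i f) = f (𝒷 i) := by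
    intro i f
    simp only [L, Finsupp.lsum_single]
    rfl
  have key : ∀ t : M ⊗[ℂ] S, ev t = L (e₀ t) := by
    intro t
    induction t using TensorProduct.induction_on with
    | zero => simp
    | add t₁ t₂ h₁ h₂ => rw [map_add, map_add, map_add, h₁, h₂]
    | tmul f s =>
      have h1 : e₀ (f ⊗ₜ s) = ((𝒷.repr s).sum fun i c => Finsupp.single i (c • f)) := by
        simp only [e₀, LinearEquiv.trans_apply, TensorProduct.congr_tmul,
          LinearEquiv.refl_apply]
        exact TensorProduct.finsuppScalarRight_apply_tmul f (𝒷.repr s)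
      rw [hev, h1, map_finsuppSum]
      have h2 : ∀ (i : ι) (c : ℂ), L (Finsupp.single i (c • f)) = c • f (𝒷 i) := by
        intro i c
        rw [hLsingle]
        rfl
      simp_rw [h2]
      conv_lhs => rw [← 𝒷.linearCombination_repr s]
      rw [Finsupp.linearCombination_apply, map_finsuppSum]
      exact Finsupp.sum_congr fun i _ => LinearMap.map_smul_of_tower f _ _
  -- injectivity of ev
  have hinj : Function.Injective ev := by
    rw [← LinearMap.ker_eq_bot, Submodule.eq_bot_iff]
    intro t ht
    rw [LinearMap.mem_ker, key t] at ht
    set g := e₀ t with hg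
    have hLg : L g = ∑ i ∈ g.support, (g i) (𝒷 i) := by
      rw [Finsupp.lsum_apply]
      rfl
    have hg0 : g = 0 := by
      have hgj : ∀ (j : ι) (v : S), (g j) v = 0 := by
        intro j v
        by_cases hjs : j ∈ g.support
        · obtain ⟨b, hb⟩ := aux_density hS hEnd (ι := {i // i ∈ g.support})
            (fun i => 𝒷 i.1) (𝒷.constr ℂ (fun i => if (i : ι) = j then v else 0))
          have hfb : ∀ i : {i // i ∈ g.support},
              b • 𝒷 i.1 = if i.1 = j then v else 0 := by
            intro i
            rw [hb i, Module.Basis.constr_basis]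
          have hzero : (0 : V) = ∑ i ∈ g.support, (g i) (b • 𝒷 i) := by
            have h3 : b • L g = ∑ i ∈ g.support, (g i) (b • 𝒷 i) := by
              rw [hLg, Finset.smul_sum]
              exact Finset.sum_congr rfl fun i _ => (map_smul (g i) b (𝒷 i)).symm
            rw [ht, smul_zero] at h3
            exact h3
          rw [show (∑ i ∈ g.support, (g i) (b • 𝒷 i)) =
              ∑ i ∈ g.support.attach, (g i.1) (b • 𝒷 i.1) from
              (Finset.sum_attach _ _).symm] at hzero
          have h4 : ∀ i : {i // i ∈ g.support},
              (g i.1) (b • 𝒷 i.1) = if i = (⟨j, hjs⟩ : {i // i ∈ g.support})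
                then (g j) v else 0 := by
            intro i
            rw [hfb i]
            by_cases hij : i.1 = j
            · rw [if_pos hij, if_pos (Subtype.ext hij), hij]
            · rw [if_neg hij, if_neg (fun h => hij (congrArg Subtype.val h)), map_zero]
          rw [Finset.sum_congr rfl (fun i _ => h4 i),
            Finset.sum_ite_eq' _ (⟨j, hjs⟩ : {i // i ∈ g.support}),
            if_pos (Finset.mem_attach _ _)] at hzero
          exact hzero.symm
        · rw [Finsupp.notMem_support_iff.mp hjs]
          rfl
      ext j v
      exact hgj j v
    have ht0 : t = e₀.symm 0 := by rw [← hg0, hg, LinearEquiv.symm_apply_apply]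
    rw [ht0, map_zero]
  -- the evaluation equivalence
  let e : (M ⊗[ℂ] S) ≃ₗ[ℂ] V :=
    LinearEquiv.ofBijective ev ⟨hinj, LinearMap.range_eq_top.mp hrange⟩
  -- nontriviality of M
  have hMnontriv : Nontrivial M := by
    refine ⟨⟨S.subtype, 0, fun h => ?_⟩⟩
    have h0 := congrArg (fun f : M => f s₀) h
    exact hs₀ (Subtype.ext h0)
  -- simplicity of M
  have hsimple : IsSimpleModule A M := by
    have hnt : Nontrivial (Submodule A M) := (Submodule.nontrivial_iff A).mpr hMnontriv
    refine { toIsSimpleOrder := ⟨fun N => ?_⟩ }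
    by_cases hN : N = ⊥
    · exact Or.inl hN
    refine Or.inr ?_
    obtain ⟨f₀, hf₀N, hf₀⟩ := Submodule.exists_mem_ne_zero_of_ne_bot hN
    have hf₀s : ∃ s : S, f₀ s ≠ 0 := by
      by_contra hc
      push_neg at hc
      exact hf₀ (LinearMap.ext fun s => hc s)
    obtain ⟨sₓ, hsₓ⟩ := hf₀s
    set W : Submodule ℂ V := Submodule.span ℂ {v : V | ∃ f ∈ N, ∃ s : S, f s = v}
      with hWdef
    have hWtop : W = ⊤ := by
      have hA : ∀ (x : A) (v : V), v ∈ W → x • v ∈ W := by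
        intro x v hv
        induction hv using Submodule.span_induction with
        | mem v hv =>
          obtain ⟨f, hfN, s, rfl⟩ := hv
          exact Submodule.subset_span ⟨x • f, N.smul_mem x hfN, s, rfl⟩
        | zero => rw [smul_zero]; exact Submodule.zero_mem _
        | add u w _ _ hu hw => rw [smul_add]; exact Submodule.add_mem _ hu hw
        | smul c u _ hu => rw [smul_comm]; exact Submodule.smul_mem _ c hu
      have hB : ∀ (b : B) (v : V), v ∈ W → b • v ∈ W := by
        intro b v hv
        induction hv using Submodule.span_induction with
        | mem v hv =>
          obtain ⟨f, hfN, s, rfl⟩ := hv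
          exact Submodule.subset_span ⟨f, hfN, b • s, map_smul f b s⟩
        | zero => rw [smul_zero]; exact Submodule.zero_mem _
        | add u w _ _ hu hw => rw [smul_add]; exact Submodule.add_mem _ hu hw
        | smul c u _ hu => rw [smul_comm]; exact Submodule.smul_mem _ c hu
      rcases hirr W hA hB with h | h
      · exfalso
        have hx : f₀ sₓ ∈ W := Submodule.subset_span ⟨f₀, hf₀N, sₓ, rfl⟩
        rw [h, Submodule.mem_bot] at hx
        exact hsₓ hx
      · exact h
    set N' : Submodule ℂ (M ⊗[ℂ] S) :=
      Submodule.span ℂ {t : M ⊗[ℂ] S | ∃ f ∈ N, ∃ s : S, t = f ⊗ₜ s} with hN'def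
    have hrep : ∀ v : V, ∃ t ∈ N', ev t = v := by
      intro v
      have hv : v ∈ W := by rw [hWtop]; trivial
      induction hv using Submodule.span_induction with
      | mem v hv =>
        obtain ⟨f, hfN, s, rfl⟩ := hv
        exact ⟨f ⊗ₜ s, Submodule.subset_span ⟨f, hfN, s, rfl⟩, rfl⟩
      | zero => exact ⟨0, Submodule.zero_mem _, map_zero ev⟩
      | add u w _ _ hu hw =>
        obtain ⟨t1, h1, e1⟩ := hu
        obtain ⟨t2, h2, e2⟩ := hw
        exact ⟨t1 + t2, Submodule.add_mem _ h1 h2, by rw [map_add, e1, e2]⟩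
      | smul c u _ hu =>
        obtain ⟨t1, h1, e1⟩ := hu
        exact ⟨c • t1, Submodule.smul_mem _ c h1, by rw [map_smul, e1]⟩
    -- the functional killing s₀
    obtain ⟨φ, hφ⟩ := aux_dual hs₀
    let Φ : M ⊗[ℂ] S →ₗ[ℂ] M := TensorProduct.lift (LinearMap.mk₂ ℂ
      (fun f s => φ s • f)
      (fun f g s => smul_add (φ s) f g)
      (fun c f s => smul_comm (φ s) c f)
      (fun f s t => by show φ (s + t) • f = φ s • f + φ t • f; rw [map_add, add_smul])
      (fun c f s => by show φ (c • s) • f = c • (φ s • f); rw [map_smul, smul_eq_mul, mul_smul]))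
    have hΦ : ∀ (f : M) (s : S), Φ (f ⊗ₜ s) = φ s • f := fun f s => rfl
    have hsmulN : ∀ (c : ℂ) (f : M), f ∈ N → c • f ∈ N := by
      intro c f hf
      have h5 := N.smul_mem (algebraMap ℂ A c) hf
      rwa [algebraMap_smul] at h5
    have hΦN : ∀ t ∈ N', Φ t ∈ N := by
      intro t ht
      induction ht using Submodule.span_induction with
      | mem t ht =>
        obtain ⟨f, hfN, s, rfl⟩ := ht
        rw [hΦ]
        exact hsmulN _ _ hfN
      | zero => rw [map_zero]; exact N.zero_mem
      | add u w _ _ hu hw => rw [map_add]; exact N.add_mem hu hw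
      | smul c u _ hu => rw [map_smul]; exact hsmulN c _ hu
    rw [Submodule.eq_top_iff']
    intro g
    obtain ⟨t, htN', hte⟩ := hrep (g s₀)
    have hgt : g ⊗ₜ s₀ = t := hinj (by rw [hev, hte])
    have hgN : Φ (g ⊗ₜ s₀) ∈ N := hgt ▸ hΦN t htN'
    rwa [hΦ, hφ, one_smul] at hgN
  refine ⟨hsimple, fun f s => hcAact (f s), e, fun f s => rfl,
    fun x f s => hevA x f s, fun b f s => hevB b f s⟩
end
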